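/- arXiv:2008.08174 — 3 statements merged into one kernel-verified Lean document; each statement's English description precedes it below -/
import Mathlib

section
/- Let q ≥ 2, k ≥ 1 and n > 2k. For every admissible choice of the parameters, |C_nd| ≤ |Irr(n)|; moreover there exists an admissible choice of the parameters (a_j, c_j for j ∈ {1,…,k}, b, ā₁,…,ā₄, b̄₁,…,b̄₄) for which |C_nd| ≥ |Irr(n)| / ( 5 · q⁴ · ⌈(n−k)/2⌉² · (4⌈n/k⌉² − 1)^k · (n−k)² ). -/
open List

namespace NoisyDup

variable {q : ℕ}

/-- Tandem duplication `T_{i,k}`: duplicates the length-`k` substring starting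
after position `i` (0-based index `i`), if it exists. -/
def dup (i k : ℕ) (x : List (ZMod q)) : List (ZMod q) :=
  if i + k ≤ x.length then x.take i ++ (x.drop i).take k ++ x.drop i else x

/-- Add `a` (mod `q`) to the entry at 0-based index `i`. -/
def addAt (x : List (ZMod q)) (i : ℕ) (a : ZMod q) : List (ZMod q) :=
  x.set i (x.getD i 0 + a)

/-- One exact tandem duplication of length `k`. -/
def ExactStep (k : ℕ) (x y : List (ZMod q)) : Prop :=
  ∃ i, i + k ≤ x.length ∧ y = dup i k x

/-- One noisy duplication of length `k`: an exact duplication followed by adding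
some `a ≠ 0` to one symbol of the inserted copy (positions are 1-indexed). -/
def NoisyStep (k : ℕ) (x y : List (ZMod q)) : Prop :=
  ∃ (i : ℕ) (a : ZMod q) (j : ℕ), i + k ≤ x.length ∧ a ≠ 0 ∧
    i + k + 1 ≤ j ∧ j ≤ i + 2 * k ∧ y = addAt (dup i k x) (j - 1) a

/-- Descendants by exact duplications only: `D_k^{*(0)}`. -/
def ExactDesc (k : ℕ) (x y : List (ZMod q)) : Prop :=
  Relation.ReflTransGen (ExactStep k) x y

/-- The descendant cone `D_k^{*(≤1)}`: any number of exact duplications and at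
most one noisy duplication. -/
def descCone (k : ℕ) (x : List (ZMod q)) : Set (List (ZMod q)) :=
  {y | ExactDesc k x y ∨ ∃ u v, ExactDesc k x u ∧ NoisyStep k u v ∧ ExactDesc k v y}

/-- `φ̂(x)`: the first `k` symbols. -/
def hatPhi (k : ℕ) (x : List (ZMod q)) : List (ZMod q) := x.take k

/-- `φ̄(x)_i = x_{i+k} - x_i` (1-indexed), a string of length `|x| - k`. -/
def barPhi (k : ℕ) (x : List (ZMod q)) : List (ZMod q) :=
  (List.range (x.length - k)).map fun i => x.getD (i + k) 0 - x.getD i 0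

/-- Auxiliary for `mu`: `cnt` counts the current run of zeros. -/
def muAux (k : ℕ) : ℕ → List (ZMod q) → List (ZMod q)
  | cnt, [] => List.replicate (cnt % k) 0
  | cnt, a :: t =>
      if a = 0 then muAux k (cnt + 1) t
      else List.replicate (cnt % k) 0 ++ a :: muAux k 0 t

/-- `μ(z)`: reduce the length of every maximal run of zeros modulo `k`. -/
def mu (k : ℕ) (z : List (ZMod q)) : List (ZMod q) := muAux k 0 z

/-- `x` contains a tandem repeat of length `k`. -/
def HasRepeat (k : ℕ) (x : List (ZMod q)) : Prop :=
  ∃ i, i + 2 * k ≤ x.length ∧ (x.drop i).take k = (x.drop (i + k)).take k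

/-- `x` is irreducible: it contains no tandem repeat of length `k`. -/
def IsIrreducible (k : ℕ) (x : List (ZMod q)) : Prop := ¬ HasRepeat k x

/-- The duplication root: the (unique) irreducible ancestor of `x` under exact
duplications of length `k`. -/
noncomputable def rt (k : ℕ) (x : List (ZMod q)) : List (ZMod q) :=
  haveI := Classical.propDecidable (∃ z, IsIrreducible k z ∧ ExactDesc k z x)
  if h : ∃ z, IsIrreducible k z ∧ ExactDesc k z x then h.choose else x

/-- The set of irreducible strings of length `n` over `Σ_q`. -/
def Irr (k n : ℕ) : Set (List (ZMod q)) := {x | x.length = n ∧ IsIrreducible k x}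

/-- `ins_k(u, j)`: the subsequence of entries in (1-indexed) positions congruent
to `j` modulo `k`. -/
def splitk (k j : ℕ) (u : List (ZMod q)) : List (ZMod q) :=
  ((u.zipIdx.map Prod.swap).filter fun p => p.1 % k == j - 1).map Prod.snd

/-- The interleaving `inl(u) = ins_k(u,1) ⋯ ins_k(u,k)`. -/
def inl (k : ℕ) (u : List (ZMod q)) : List (ZMod q) :=
  ((List.range k).map fun j => splitk k (j + 1) u).flatten

/-- The indicator `Γ(z)` of the nonzero entries of `z`. -/
def gamma (z : List (ZMod q)) : List Bool := z.map fun a => decide (a ≠ 0)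

/-- The cumulative-sum map (mod `q`). -/
def cusum (z : List (ZMod q)) : List (ZMod q) :=
  (List.range z.length).map fun i => (z.take (i + 1)).sum

/-- Hamming weight of a binary string. -/
def wt (u : List Bool) : ℕ := u.count true

/-- The VT syndrome `Σ i·u_i` (1-indexed). -/
def vtSum (u : List Bool) : ℕ := ((u.zipIdx.map Prod.swap).map fun p => if p.2 then p.1 + 1 else 0).sum

/-- The (variable-length) Varshamov–Tenengolts code. -/
def CVT (α m : ℕ) : Set (List Bool) := {z | z.length ≤ m - 1 ∧ vtSum z % m = α}

/-- `Σ_{i=1}^{|u|} i · (u_1 + ⋯ + u_i)`. -/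
def wSum (u : List Bool) : ℕ :=
  ((List.range u.length).map fun i => (i + 1) * wt (u.take (i + 1))).sum

/-- Tenengolts' binary map `ζ`. -/
def zeta (z : List (ZMod q)) : List Bool :=
  (z.zipIdx.map Prod.swap).map fun p => if p.1 = 0 then true else decide ((z.getD (p.1 - 1) 0).val ≤ p.2.val)

/-- `Σ_{i=1}^{|z|} (i-1)·ζ(z)_i`. -/
def tqSum (z : List (ZMod q)) : ℕ := (((zeta z).zipIdx.map Prod.swap).map fun p => if p.2 then p.1 else 0).sum

/-- Tenengolts' (variable-length) `q`-ary single-indel-correcting code. -/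
def CTq (α β m : ℕ) : Set (List (ZMod q)) :=
  {z | z.length ≤ m ∧ (z.map ZMod.val).sum % q = α ∧ tqSum z % m = β}

/-- The length of `s_j = Γ(ins_k(μ,j))` for a codeword of length `n`
(the number of positions in `{1,…,n-k}` congruent to `j` mod `k`). -/
def sLen (k n j : ℕ) : ℕ := (List.range (n - k)).countP fun i => i % k == j - 1

/-- Admissibility of the parameters of the code `C_nd`. -/
def Admissible (q k n : ℕ) (a c : ℕ → ℕ) (b a1 a2 a3 a4 b1 b2 b3 b4 : ℕ) : Prop :=
  (∀ j ∈ Finset.Icc 1 k, a j ≤ 2 * (sLen k n j + 1)) ∧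
  (∀ j ∈ Finset.Icc 1 k, c j ≤ 2 * sLen k n j) ∧
  b ≤ 4 ∧ a1 ≤ q - 1 ∧ a2 ≤ q - 1 ∧ a3 ≤ q - 1 ∧ a4 ≤ q - 1 ∧
  b1 ≤ (n - k) / 2 ∧ b2 ≤ (n - k) / 2 ∧ b3 ≤ n - k - 1 ∧ b4 ≤ n - k - 1

/-- The code `C_nd` for the noisy duplication channel. -/
def Cnd (k n : ℕ) (a c : ℕ → ℕ) (b a1 a2 a3 a4 b1 b2 b3 b4 : ℕ) : Set (List (ZMod q)) :=
  {x | x.length = n ∧ IsIrreducible k x ∧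
    (∀ j ∈ Finset.Icc 1 k,
        gamma (splitk k j (mu k (barPhi k x))) ∈
          CVT (a j) (2 * (gamma (splitk k j (mu k (barPhi k x)))).length + 3)) ∧
    (∀ j ∈ Finset.Icc 1 k,
        wSum (gamma (splitk k j (mu k (barPhi k x)))) %
          (2 * (gamma (splitk k j (mu k (barPhi k x)))).length + 1) = c j) ∧
    ((Finset.Icc 1 k).sum fun j => wt (gamma (splitk k j (mu k (barPhi k x))))) % 5 = b ∧
    splitk 2 1 (inl k (mu k (barPhi k x))) ∈ CTq a1 b1 ((n - k + 1) / 2) ∧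
    splitk 2 2 (inl k (mu k (barPhi k x))) ∈ CTq a2 b2 ((n - k + 1) / 2) ∧
    cusum (inl k (mu k (barPhi k x))) ∈ CTq a3 b3 (n - k) ∧
    inl k (mu k (barPhi k x)) ∈ CTq a4 b4 (n - k)}

/-- `w` is obtained from `u` by deleting one occurrence of the symbol `b`. -/
def delSymb (u w : List (ZMod q)) (b : ZMod q) : Prop :=
  ∃ i, i < u.length ∧ u.getD i 0 = b ∧ w = u.eraseIdx i

/-- `w` is obtained from `u` by inserting the symbol `b` at some position. -/
def insOne (u w : List (ZMod q)) (b : ZMod q) : Prop :=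
  ∃ i, i ≤ u.length ∧ w = u.take i ++ b :: u.drop i

/-- `w` is obtained from `u` by inserting the adjacent pair `b, c`. -/
def insPair (u w : List (ZMod q)) (b c : ZMod q) : Prop :=
  ∃ i, i ≤ u.length ∧ w = u.take i ++ b :: c :: u.drop i

/-- `w` is obtained from `u` by inserting two `0`s separated by exactly one
(unchanged) symbol of `u`. -/
def insSpread0 (u w : List (ZMod q)) : Prop :=
  ∃ i, i < u.length ∧ w = u.take i ++ 0 :: u.getD i 0 :: 0 :: u.drop (i + 1)

/-- `w` is obtained from `u` by inserting a nonzero `a` and replacing the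
symbol `c` immediately following the insertion point by `c - a`. -/
def insSub (u w : List (ZMod q)) : Prop :=
  ∃ a : ZMod q, a ≠ 0 ∧ ∃ i, i < u.length ∧
    w = u.take i ++ a :: (u.getD i 0 - a) :: u.drop (i + 1)

/-- `w` is obtained from `u` by replacing a single symbol `0` by a nonzero symbol. -/
def subOne (u w : List (ZMod q)) : Prop :=
  ∃ i, i < u.length ∧ u.getD i 0 = 0 ∧ ∃ a : ZMod q, a ≠ 0 ∧ w = u.set i a

/-- `w` is obtained from `u` by replacing two adjacent symbols `0, c` by
`a, c - a` for some nonzero `a`. -/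
def subTwo (u w : List (ZMod q)) : Prop :=
  ∃ i, i + 1 < u.length ∧ u.getD i 0 = 0 ∧ ∃ a : ZMod q, a ≠ 0 ∧
    w = u.take i ++ a :: (u.getD (i + 1) 0 - a) :: u.drop (i + 2)

/-- `w` is obtained from `u` by swapping an adjacent pair `b, 0` (with `b ≠ 0`)
into `0, b`. -/
def swapPair (u w : List (ZMod q)) : Prop :=
  ∃ i, i + 1 < u.length ∧ u.getD i 0 ≠ 0 ∧ u.getD (i + 1) 0 = 0 ∧
    w = u.take i ++ 0 :: u.getD i 0 :: u.drop (i + 2)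

/-- `w` is obtained from `u` by deleting a single symbol. -/
def delQ (u w : List (ZMod q)) : Prop := ∃ i, i < u.length ∧ w = u.eraseIdx i

/-- `w` is obtained from `u` by inserting a single symbol. -/
def insQ (u w : List (ZMod q)) : Prop :=
  ∃ (i : ℕ) (b : ZMod q), i ≤ u.length ∧ w = u.take i ++ b :: u.drop i


section AuxCnd

lemma countP_range_eq (L : ℕ) (p : ℕ → Bool) :
    (List.range L).countP p = ((Finset.range L).filter (fun i => p i)).card := by
  simp [Finset.filter, Finset.range, Finset.card, Multiset.range, List.countP_eq_length_filter]

lemma sum_map_range (k : ℕ) (f : ℕ → ℕ) :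
    ((List.range k).map f).sum = ∑ j ∈ Finset.range k, f j := by
  induction k with
  | zero => simp
  | succ m ih => rw [List.range_succ, Finset.sum_range_succ]; simp [ih]

lemma countP_range_mono (p : ℕ → Bool) {m L : ℕ} (h : m ≤ L) :
    (List.range m).countP p ≤ (List.range L).countP p := by
  rw [countP_range_eq, countP_range_eq]
  exact Finset.card_le_card (Finset.filter_subset_filter _ (Finset.range_subset_range.2 h))

lemma countP_range_mod_le {k : ℕ} (hk : 1 ≤ k) (L r : ℕ) :
    (List.range L).countP (fun i => i % k == r) ≤ (L + k - 1) / k := by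
  rw [countP_range_eq]
  have h := Finset.card_le_card_of_injOn (f := fun i => i / k)
    (s := (Finset.range L).filter (fun i => (i % k == r) = true))
    (t := Finset.range ((L + k - 1) / k)) ?_ ?_
  · simpa using h
  · intro i hi
    simp only [Finset.mem_coe, Finset.mem_filter, Finset.mem_range] at hi ⊢
    have h1 : i ≤ L - 1 := by omega
    have h2 : i / k ≤ (L - 1) / k := Nat.div_le_div_right h1
    have h3 : (L + k - 1) / k = (L - 1) / k + 1 := by
      have hL : L + k - 1 = (L - 1) + k := by omega
      rw [hL, Nat.add_div_right _ hk]
    omega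
  · intro a ha b hb hab
    simp only [Finset.coe_filter, Set.mem_setOf_eq, Finset.mem_range, beq_iff_eq] at ha hb
    calc a = k * (a / k) + a % k := (Nat.div_add_mod a k).symm
    _ = k * (b / k) + b % k := by simp only at hab; rw [hab, ha.2, hb.2]
    _ = b := Nat.div_add_mod b k

end AuxCnd

lemma splitk_length (k j : ℕ) (u : List (ZMod q)) :
    (splitk k j u).length = (List.range u.length).countP (fun i => i % k == j - 1) := by
  rw [splitk, List.length_map, ← List.countP_eq_length_filter, List.countP_map,
      List.range_eq_range', ← List.zipIdx_map_snd 0 u, List.countP_map]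
  rfl

lemma gamma_length (z : List (ZMod q)) : (gamma z).length = z.length := by simp [gamma]

lemma cusum_length (z : List (ZMod q)) : (cusum z).length = z.length := by simp [cusum]

lemma barPhi_length (k : ℕ) (x : List (ZMod q)) : (barPhi k x).length = x.length - k := by
  simp [barPhi]

lemma muAux_length_le (k : ℕ) (z : List (ZMod q)) :
    ∀ cnt, (muAux k cnt z).length ≤ cnt % k + z.length := by
  induction z with
  | nil => intro cnt; simp [muAux]
  | cons a t ih =>
    intro cnt
    rw [muAux]
    split
    · have h1 : (cnt + 1) % k ≤ cnt % k + 1 := by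
        calc (cnt + 1) % k = (cnt % k + 1 % k) % k := by rw [Nat.add_mod]
        _ ≤ cnt % k + 1 % k := Nat.mod_le _ _
        _ ≤ cnt % k + 1 := by have := Nat.mod_le 1 k; omega
      have h2 := ih (cnt + 1)
      simp only [List.length_cons]
      omega
    · have h2 := ih 0
      simp only [List.length_append, List.length_replicate, List.length_cons]
      simp only [Nat.zero_mod, Nat.zero_add] at h2
      omega

lemma mu_length_le (k : ℕ) (z : List (ZMod q)) : (mu k z).length ≤ z.length := by
  have := muAux_length_le k z 0
  simpa [mu] using this

lemma inl_length_le {k : ℕ} (hk : 1 ≤ k) (u : List (ZMod q)) : (inl k u).length ≤ u.length := by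
  have hmain : ∑ j ∈ Finset.range k,
      ((Finset.range u.length).filter (fun i => i % k = j)).card = u.length := by
    rw [← Finset.card_eq_sum_card_fiberwise
      (fun x (_ : x ∈ Finset.range u.length) => Finset.mem_range.2 (Nat.mod_lt x hk)),
      Finset.card_range]
  have hlen : (inl k u).length = ∑ j ∈ Finset.range k, (splitk k (j + 1) u).length := by
    rw [inl, List.length_flatten, List.map_map, sum_map_range]
    rfl
  rw [hlen, ← hmain]
  apply le_of_eq
  apply Finset.sum_congr rfl
  intro j _
  rw [splitk_length, countP_range_eq]
  congr 1
  apply Finset.filter_congr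
  intro i _
  simp

def encL : List (ℕ × ℕ) → ℕ
  | [] => 0
  | p :: t => p.1 + p.2 * encL t

lemma encL_lt : ∀ l : List (ℕ × ℕ), (∀ p ∈ l, p.1 < p.2) → encL l < (l.map Prod.snd).prod
  | [], _ => by simp [encL]
  | p :: t, h => by
    have ht := encL_lt t (fun x hx => h x (List.mem_cons_of_mem _ hx))
    have hp := h p List.mem_cons_self
    simp only [encL, List.map_cons, List.prod_cons]
    have h1 : p.1 + p.2 * encL t < p.2 * (encL t + 1) := by
      have : p.2 * (encL t + 1) = p.2 * encL t + p.2 := by ring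
      omega
    exact h1.trans_le (Nat.mul_le_mul_left _ (by omega))

lemma encL_inj : ∀ l1 l2 : List (ℕ × ℕ), l1.map Prod.snd = l2.map Prod.snd →
    (∀ p ∈ l1, p.1 < p.2) → (∀ p ∈ l2, p.1 < p.2) → encL l1 = encL l2 → l1 = l2
  | [], [], _, _, _, _ => rfl
  | [], p :: t, h, _, _, _ => by simp at h
  | p :: t, [], h, _, _, _ => by simp at h
  | p :: t, p' :: t', h, h1, h2, he => by
    simp only [List.map_cons, List.cons.injEq] at h
    obtain ⟨hr, ht⟩ := h
    have hp := h1 p List.mem_cons_self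
    have hp' := h2 p' List.mem_cons_self
    simp only [encL] at he
    rw [← hr] at he hp'
    have hfst : p.1 = p'.1 := by
      calc p.1 = (p.1 + p.2 * encL t) % p.2 := by
            rw [Nat.add_mul_mod_self_left, Nat.mod_eq_of_lt hp]
      _ = (p'.1 + p.2 * encL t') % p.2 := by rw [he]
      _ = p'.1 := by rw [Nat.add_mul_mod_self_left, Nat.mod_eq_of_lt hp']
    rw [hfst] at he
    have hE : encL t = encL t' :=
      Nat.eq_of_mul_eq_mul_left (by omega) (Nat.add_left_cancel he)
    have htail : t = t' := encL_inj t t' ht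
      (fun x hx => h1 x (List.mem_cons_of_mem _ hx))
      (fun x hx => h2 x (List.mem_cons_of_mem _ hx)) hE
    have hhead : p = p' := Prod.ext hfst hr
    rw [hhead, htail]

def gOf (k j : ℕ) (x : List (ZMod q)) : List Bool := gamma (splitk k j (mu k (barPhi k x)))
def Aval (k j : ℕ) (x : List (ZMod q)) : ℕ := vtSum (gOf k j x) % (2 * (gOf k j x).length + 3)
def Cval (k j : ℕ) (x : List (ZMod q)) : ℕ := wSum (gOf k j x) % (2 * (gOf k j x).length + 1)
def Bval (k : ℕ) (x : List (ZMod q)) : ℕ := ((Finset.Icc 1 k).sum fun j => wt (gOf k j x)) % 5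
def inlOf (k : ℕ) (x : List (ZMod q)) : List (ZMod q) := inl k (mu k (barPhi k x))
def A1val (k : ℕ) (x : List (ZMod q)) : ℕ := ((splitk 2 1 (inlOf k x)).map ZMod.val).sum % q
def A2val (k : ℕ) (x : List (ZMod q)) : ℕ := ((splitk 2 2 (inlOf k x)).map ZMod.val).sum % q
def A3val (k : ℕ) (x : List (ZMod q)) : ℕ := ((cusum (inlOf k x)).map ZMod.val).sum % q
def A4val (k : ℕ) (x : List (ZMod q)) : ℕ := ((inlOf k x).map ZMod.val).sum % q
def B1val (k n : ℕ) (x : List (ZMod q)) : ℕ := tqSum (splitk 2 1 (inlOf k x)) % ((n - k + 1) / 2)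
def B2val (k n : ℕ) (x : List (ZMod q)) : ℕ := tqSum (splitk 2 2 (inlOf k x)) % ((n - k + 1) / 2)
def B3val (k n : ℕ) (x : List (ZMod q)) : ℕ := tqSum (cusum (inlOf k x)) % (n - k)
def B4val (k n : ℕ) (x : List (ZMod q)) : ℕ := tqSum (inlOf k x) % (n - k)

lemma mu_barPhi_length_le (k n : ℕ) (x : List (ZMod q)) (hxl : x.length = n) :
    (mu k (barPhi k x)).length ≤ n - k := by
  have h := mu_length_le k (barPhi k x)
  rw [barPhi_length, hxl] at h
  exact h

lemma gOf_length_le (k n : ℕ) (j : ℕ) (x : List (ZMod q)) (hxl : x.length = n) :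
    (gOf k j x).length ≤ sLen k n j := by
  rw [gOf, gamma_length, splitk_length, sLen]
  exact countP_range_mono _ (mu_barPhi_length_le k n x hxl)

lemma inlOf_length_le (k n : ℕ) (hk : 1 ≤ k) (x : List (ZMod q)) (hxl : x.length = n) :
    (inlOf k x).length ≤ n - k :=
  (inl_length_le hk _).trans (mu_barPhi_length_le k n x hxl)

lemma od_length_le (k n : ℕ) (hk : 1 ≤ k) (j : ℕ) (x : List (ZMod q)) (hxl : x.length = n) :
    (splitk 2 j (inlOf k x)).length ≤ (n - k + 1) / 2 := by
  rw [splitk_length]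
  have h1 := countP_range_mod_le (k := 2) (by norm_num) (inlOf k x).length (j - 1)
  have h2 := inlOf_length_le k n hk x hxl
  omega

lemma mem_Cnd_of_canonical {k n : ℕ} (hk : 1 ≤ k) (hn : 2 * k < n)
    (x : List (ZMod q)) (hxl : x.length = n) (hxi : IsIrreducible k x)
    (a c : ℕ → ℕ) (b a1 a2 a3 a4 b1 b2 b3 b4 : ℕ)
    (ha : ∀ j ∈ Finset.Icc 1 k, a j = Aval k j x)
    (hc : ∀ j ∈ Finset.Icc 1 k, c j = Cval k j x)
    (hb : b = Bval k x) (h1 : a1 = A1val k x) (h2 : a2 = A2val k x)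
    (h3 : a3 = A3val k x) (h4 : a4 = A4val k x)
    (g1 : b1 = B1val k n x) (g2 : b2 = B2val k n x) (g3 : b3 = B3val k n x)
    (g4 : b4 = B4val k n x) :
    x ∈ Cnd (q := q) k n a c b a1 a2 a3 a4 b1 b2 b3 b4 := by
  refine ⟨hxl, hxi, ?_, ?_, hb.symm, ?_, ?_, ?_, ?_⟩
  · intro j hj
    exact ⟨by omega, (ha j hj).symm⟩
  · intro j hj
    exact (hc j hj).symm
  · exact ⟨od_length_le k n hk 1 x hxl, h1.symm, g1.symm⟩
  · exact ⟨od_length_le k n hk 2 x hxl, h2.symm, g2.symm⟩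
  · refine ⟨?_, h3.symm, g3.symm⟩
    rw [cusum_length]
    exact inlOf_length_le k n hk x hxl
  · exact ⟨inlOf_length_le k n hk x hxl, h4.symm, g4.symm⟩

lemma admissible_canonical {k n : ℕ} (hq : 2 ≤ q) (hk : 1 ≤ k) (hn : 2 * k < n)
    (x : List (ZMod q)) (hxl : x.length = n) :
    Admissible q k n (fun j => Aval k j x) (fun j => Cval k j x) (Bval k x)
      (A1val k x) (A2val k x) (A3val k x) (A4val k x)
      (B1val k n x) (B2val k n x) (B3val k n x) (B4val k n x) := by
  have hnk : 1 ≤ n - k := by omega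
  refine ⟨?_, ?_, ?_, ?_, ?_, ?_, ?_, ?_, ?_, ?_, ?_⟩
  · intro j hj
    show Aval k j x ≤ 2 * (sLen k n j + 1)
    have hL := gOf_length_le k n j x hxl
    have hA : Aval k j x < 2 * (gOf k j x).length + 3 := Nat.mod_lt _ (by omega)
    omega
  · intro j hj
    show Cval k j x ≤ 2 * sLen k n j
    have hL := gOf_length_le k n j x hxl
    have hC : Cval k j x < 2 * (gOf k j x).length + 1 := Nat.mod_lt _ (by omega)
    omega
  · have : Bval k x < 5 := Nat.mod_lt _ (by norm_num)
    omega
  · have : A1val k x < q := Nat.mod_lt _ (by omega)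
    omega
  · have : A2val k x < q := Nat.mod_lt _ (by omega)
    omega
  · have : A3val k x < q := Nat.mod_lt _ (by omega)
    omega
  · have : A4val k x < q := Nat.mod_lt _ (by omega)
    omega
  · have : B1val k n x < (n - k + 1) / 2 := Nat.mod_lt _ (by omega)
    omega
  · have : B2val k n x < (n - k + 1) / 2 := Nat.mod_lt _ (by omega)
    omega
  · have : B3val k n x < n - k := Nat.mod_lt _ (by omega)
    omega
  · have : B4val k n x < n - k := Nat.mod_lt _ (by omega)
    omega

def encListOf (k n : ℕ) (x : List (ZMod q)) : List (ℕ × ℕ) :=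
  ((List.range k).map fun j => (Aval k (j + 1) x, 2 * sLen k n (j + 1) + 3)) ++
    ((List.range k).map fun j => (Cval k (j + 1) x, 2 * sLen k n (j + 1) + 1)) ++
    [(Bval k x, 5), (A1val k x, q), (A2val k x, q), (A3val k x, q), (A4val k x, q),
      (B1val k n x, (n - k + 1) / 2), (B2val k n x, (n - k + 1) / 2),
      (B3val k n x, n - k), (B4val k n x, n - k)]

def encOf (k n : ℕ) (x : List (ZMod q)) : ℕ := encL (encListOf k n x)

lemma encListOf_bounds {k n : ℕ} (hq : 2 ≤ q) (hk : 1 ≤ k) (hn : 2 * k < n)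
    (x : List (ZMod q)) (hxl : x.length = n) :
    ∀ p ∈ encListOf k n x, p.1 < p.2 := by
  intro p hp
  simp only [encListOf, List.mem_append, List.mem_map, List.mem_range, List.mem_cons,
    List.not_mem_nil, or_false] at hp
  rcases hp with (⟨j, hj, rfl⟩ | ⟨j, hj, rfl⟩) | hp
  · have hA : Aval k (j + 1) x < 2 * (gOf k (j + 1) x).length + 3 := Nat.mod_lt _ (by omega)
    have hL := gOf_length_le k n (j + 1) x hxl
    simp only
    omega
  · have hC : Cval k (j + 1) x < 2 * (gOf k (j + 1) x).length + 1 := Nat.mod_lt _ (by omega)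
    have hL := gOf_length_le k n (j + 1) x hxl
    simp only
    omega
  · rcases hp with rfl | rfl | rfl | rfl | rfl | rfl | rfl | rfl | rfl
    · exact Nat.mod_lt _ (by norm_num)
    · exact Nat.mod_lt _ (by omega)
    · exact Nat.mod_lt _ (by omega)
    · exact Nat.mod_lt _ (by omega)
    · exact Nat.mod_lt _ (by omega)
    · exact Nat.mod_lt _ (by omega)
    · exact Nat.mod_lt _ (by omega)
    · exact Nat.mod_lt _ (by omega)
    · exact Nat.mod_lt _ (by omega)

def Nnat (q k n : ℕ) : ℕ :=
  ((List.range k).map fun j => 2 * sLen k n (j + 1) + 3).prod *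
    ((List.range k).map fun j => 2 * sLen k n (j + 1) + 1).prod *
    (5 * q ^ 4 * ((n - k + 1) / 2) ^ 2 * (n - k) ^ 2)

lemma encListOf_map_snd (k n : ℕ) (x : List (ZMod q)) :
    (encListOf k n x).map Prod.snd =
      ((List.range k).map fun j => 2 * sLen k n (j + 1) + 3) ++
        ((List.range k).map fun j => 2 * sLen k n (j + 1) + 1) ++
        [5, q, q, q, q, (n - k + 1) / 2, (n - k + 1) / 2, n - k, n - k] := by
  simp [encListOf, List.map_append, List.map_map, Function.comp_def]

lemma encOf_lt {k n : ℕ} (hq : 2 ≤ q) (hk : 1 ≤ k) (hn : 2 * k < n)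
    (x : List (ZMod q)) (hxl : x.length = n) :
    encOf k n x < Nnat q k n := by
  have h := encL_lt (encListOf k n x) (encListOf_bounds hq hk hn x hxl)
  rw [encListOf_map_snd] at h
  refine h.trans_le (le_of_eq ?_)
  rw [Nnat]
  simp [List.prod_append]
  ring

lemma Nnat_le {k n : ℕ} (hk : 1 ≤ k) (hn : 2 * k < n) :
    Nnat q k n ≤
      5 * q ^ 4 * ((n - k + 1) / 2) ^ 2 * (4 * ((n + k - 1) / k) ^ 2 - 1) ^ k * (n - k) ^ 2 := by
  set M := (n + k - 1) / k with hM
  have hfac : ∀ j : ℕ, (2 * sLen k n (j + 1) + 3) * (2 * sLen k n (j + 1) + 1) ≤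
      4 * M ^ 2 - 1 := by
    intro j
    set s := sLen k n (j + 1) with hs
    have hsle : s + 1 ≤ M := by
      have h1 : s ≤ (n - k + k - 1) / k := countP_range_mod_le hk _ _
      have h2 : n - k + k - 1 = n - 1 := by omega
      have h3 : M = (n - 1) / k + 1 := by
        have h4 : n + k - 1 = (n - 1) + k := by omega
        rw [hM, h4, Nat.add_div_right _ hk]
      rw [h2] at h1
      omega
    have hmul : (s + 1) * (s + 1) ≤ M * M := Nat.mul_le_mul hsle hsle
    have he1 : (2 * s + 3) * (2 * s + 1) + 1 = 4 * ((s + 1) * (s + 1)) := by ring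
    have key : ∀ X u v : ℕ, X + 1 = 4 * u → u ≤ v → X ≤ 4 * v - 1 := by
      intro X u v e1 e2
      omega
    calc (2 * s + 3) * (2 * s + 1) ≤ 4 * (M * M) - 1 := key _ _ _ he1 hmul
    _ = 4 * M ^ 2 - 1 := by rw [pow_two]
  have hprod : ((List.range k).map fun j => 2 * sLen k n (j + 1) + 3).prod *
      ((List.range k).map fun j => 2 * sLen k n (j + 1) + 1).prod ≤ (4 * M ^ 2 - 1) ^ k := by
    rw [← List.prod_map_mul]
    have hlen : ((List.range k).map fun j =>
        (2 * sLen k n (j + 1) + 3) * (2 * sLen k n (j + 1) + 1)).length = k := by simp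
    calc ((List.range k).map fun j =>
          (2 * sLen k n (j + 1) + 3) * (2 * sLen k n (j + 1) + 1)).prod
        ≤ (4 * M ^ 2 - 1) ^ (((List.range k).map fun j =>
            (2 * sLen k n (j + 1) + 3) * (2 * sLen k n (j + 1) + 1)).length) := by
          apply List.prod_le_pow_card
          intro y hy
          simp only [List.mem_map, List.mem_range] at hy
          obtain ⟨j, _, rfl⟩ := hy
          exact hfac j
    _ = (4 * M ^ 2 - 1) ^ k := by rw [hlen]
  calc Nnat q k n ≤ (4 * M ^ 2 - 1) ^ k * (5 * q ^ 4 * ((n - k + 1) / 2) ^ 2 * (n - k) ^ 2) :=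
        Nat.mul_le_mul_right _ hprod
  _ = 5 * q ^ 4 * ((n - k + 1) / 2) ^ 2 * (4 * M ^ 2 - 1) ^ k * (n - k) ^ 2 := by ring

lemma encOf_inj {k n : ℕ} (hq : 2 ≤ q) (hk : 1 ≤ k) (hn : 2 * k < n)
    (x y : List (ZMod q)) (hx : x.length = n) (hy : y.length = n)
    (h : encOf k n x = encOf k n y) :
    (∀ j ∈ Finset.Icc 1 k, Aval k j x = Aval k j y) ∧
    (∀ j ∈ Finset.Icc 1 k, Cval k j x = Cval k j y) ∧
    Bval k x = Bval k y ∧ A1val k x = A1val k y ∧ A2val k x = A2val k y ∧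
    A3val k x = A3val k y ∧ A4val k x = A4val k y ∧ B1val k n x = B1val k n y ∧
    B2val k n x = B2val k n y ∧ B3val k n x = B3val k n y ∧ B4val k n x = B4val k n y := by
  have hlist : encListOf k n x = encListOf k n y := by
    apply encL_inj _ _ ?_ (encListOf_bounds hq hk hn x hx) (encListOf_bounds hq hk hn y hy) h
    rw [encListOf_map_snd, encListOf_map_snd]
  rw [encListOf, encListOf] at hlist
  obtain ⟨h12, hT⟩ := List.append_inj hlist (by simp)
  obtain ⟨hA, hC⟩ := List.append_inj h12 (by simp)
  rw [List.map_eq_map_iff] at hA hC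
  simp only [List.cons.injEq, Prod.mk.injEq, and_true, true_and] at hT
  refine ⟨?_, ?_, ?_⟩
  · intro j hj
    rw [Finset.mem_Icc] at hj
    have hjr := hA (j - 1) (List.mem_range.2 (by omega))
    have hjj : j - 1 + 1 = j := by omega
    rw [hjj] at hjr
    exact (Prod.mk.injEq _ _ _ _ ▸ hjr).1
  · intro j hj
    rw [Finset.mem_Icc] at hj
    have hjr := hC (j - 1) (List.mem_range.2 (by omega))
    have hjj : j - 1 + 1 = j := by omega
    rw [hjj] at hjr
    exact (Prod.mk.injEq _ _ _ _ ▸ hjr).1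
  · exact hT

/-- every admissible instance of `C_nd` has size at most `|Irr(n)|`,
and some admissible choice of parameters achieves size at least
`|Irr(n)| / (5 q⁴ ⌈(n-k)/2⌉² (4⌈n/k⌉² - 1)^k (n-k)²)`. -/
theorem cnd_size_bounds
    (q k n : ℕ) (hq : 2 ≤ q) (hk : 1 ≤ k) (hn : 2 * k < n) :
    (∀ (a c : ℕ → ℕ) (b a1 a2 a3 a4 b1 b2 b3 b4 : ℕ),
        Admissible q k n a c b a1 a2 a3 a4 b1 b2 b3 b4 →
        (Cnd (q := q) k n a c b a1 a2 a3 a4 b1 b2 b3 b4).ncard ≤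
          (Irr (q := q) k n).ncard) ∧
    ∃ (a c : ℕ → ℕ) (b a1 a2 a3 a4 b1 b2 b3 b4 : ℕ),
      Admissible q k n a c b a1 a2 a3 a4 b1 b2 b3 b4 ∧
      ((Irr (q := q) k n).ncard : ℝ) /
          (5 * (q : ℝ) ^ 4 * (((n - k + 1) / 2 : ℕ) : ℝ) ^ 2 *
            ((4 * ((n + k - 1) / k) ^ 2 - 1 : ℕ) : ℝ) ^ k * ((n - k : ℕ) : ℝ) ^ 2) ≤
        ((Cnd (q := q) k n a c b a1 a2 a3 a4 b1 b2 b3 b4).ncard : ℝ) := by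
  haveI : NeZero q := ⟨by omega⟩
  have hfin : (Irr (q := q) k n).Finite :=
    (List.finite_length_eq (ZMod q) n).subset (fun x hx => hx.1)
  constructor
  · intro a c b a1 a2 a3 a4 b1 b2 b3 b4 _
    exact Set.ncard_le_ncard (fun x hx => ⟨hx.1, hx.2.1⟩) hfin
  · set F := hfin.toFinset with hF
    have hmem : ∀ x ∈ F, x ∈ Irr (q := q) k n := fun x hx => hfin.mem_toFinset.mp hx
    by_cases hFne : F.Nonempty
    · set t := F.image (encOf k n) with ht
      have htne : t.Nonempty := hFne.image _
      have htpos : 0 < t.card := Finset.card_pos.2 htne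
      have h0 : (t.card : ℝ) ≠ 0 := by exact_mod_cast htpos.ne'
      have hmaps : ∀ x ∈ F, encOf k n x ∈ t := fun x hx => Finset.mem_image_of_mem _ hx
      have hcard : F.card = ∑ bb ∈ t, (F.filter (fun x => encOf k n x = bb)).card :=
        Finset.card_eq_sum_card_fiberwise hmaps
      have htN : t.card ≤ Nnat q k n := by
        have hsub : t ⊆ Finset.range (Nnat q k n) := by
          intro bb hbb
          obtain ⟨x, hx, rfl⟩ := Finset.mem_image.mp hbb
          exact Finset.mem_range.2 (encOf_lt hq hk hn x (hmem x hx).1)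
        simpa using Finset.card_le_card hsub
      have hex : ∃ bb ∈ t, (F.card : ℝ) / (t.card : ℝ) ≤
          ((F.filter (fun x => encOf k n x = bb)).card : ℝ) := by
        apply Finset.exists_le_of_sum_le htne
        have hmc : (t.card : ℝ) * ((F.card : ℝ) / (t.card : ℝ)) = (F.card : ℝ) := by
          field_simp
        rw [Finset.sum_const, nsmul_eq_mul, hmc, hcard]
        push_cast
        exact le_rfl
      obtain ⟨bb, hbb, hle⟩ := hex
      obtain ⟨x₀, hx₀F, hx₀b⟩ := Finset.mem_image.mp hbb
      obtain ⟨hx₀l, hx₀i⟩ := hmem x₀ hx₀F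
      refine ⟨fun j => Aval k j x₀, fun j => Cval k j x₀, Bval k x₀,
        A1val k x₀, A2val k x₀, A3val k x₀, A4val k x₀,
        B1val k n x₀, B2val k n x₀, B3val k n x₀, B4val k n x₀,
        admissible_canonical hq hk hn x₀ hx₀l, ?_⟩
      have hsub : ↑(F.filter (fun x => encOf k n x = bb)) ⊆
          Cnd (q := q) k n (fun j => Aval k j x₀) (fun j => Cval k j x₀) (Bval k x₀)
            (A1val k x₀) (A2val k x₀) (A3val k x₀) (A4val k x₀)
            (B1val k n x₀) (B2val k n x₀) (B3val k n x₀) (B4val k n x₀) := by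
        intro y hy
        rw [Finset.mem_coe, Finset.mem_filter] at hy
        obtain ⟨hyF, hyb⟩ := hy
        obtain ⟨hyl, hyi⟩ := hmem y hyF
        have henc : encOf k n y = encOf k n x₀ := by rw [hyb, hx₀b]
        obtain ⟨eA, eC, eB, e1, e2, e3, e4, f1, f2, f3, f4⟩ :=
          encOf_inj hq hk hn y x₀ hyl hx₀l henc
        exact mem_Cnd_of_canonical hk hn y hyl hyi _ _ _ _ _ _ _ _ _ _ _
          (fun j hj => (eA j hj).symm) (fun j hj => (eC j hj).symm)
          eB.symm e1.symm e2.symm e3.symm e4.symm f1.symm f2.symm f3.symm f4.symm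
      have hCfin : (Cnd (q := q) k n (fun j => Aval k j x₀) (fun j => Cval k j x₀) (Bval k x₀)
          (A1val k x₀) (A2val k x₀) (A3val k x₀) (A4val k x₀)
          (B1val k n x₀) (B2val k n x₀) (B3val k n x₀) (B4val k n x₀)).Finite :=
        hfin.subset (fun z hz => ⟨hz.1, hz.2.1⟩)
      have hfc : (F.filter (fun x => encOf k n x = bb)).card ≤
          (Cnd (q := q) k n (fun j => Aval k j x₀) (fun j => Cval k j x₀) (Bval k x₀)
            (A1val k x₀) (A2val k x₀) (A3val k x₀) (A4val k x₀)
            (B1val k n x₀) (B2val k n x₀) (B3val k n x₀) (B4val k n x₀)).ncard := by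
        have h := Set.ncard_le_ncard hsub hCfin
        rwa [Set.ncard_coe_finset] at h
      have hIrrcard : (Irr (q := q) k n).ncard = F.card := by
        rw [Set.ncard_eq_toFinset_card _ hfin]
      rw [hIrrcard]
      have hden : (t.card : ℝ) ≤ 5 * (q : ℝ) ^ 4 * (((n - k + 1) / 2 : ℕ) : ℝ) ^ 2 *
          ((4 * ((n + k - 1) / k) ^ 2 - 1 : ℕ) : ℝ) ^ k * ((n - k : ℕ) : ℝ) ^ 2 := by
        have h1 : t.card ≤ 5 * q ^ 4 * ((n - k + 1) / 2) ^ 2 *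
            (4 * ((n + k - 1) / k) ^ 2 - 1) ^ k * (n - k) ^ 2 := htN.trans (Nnat_le hk hn)
        calc (t.card : ℝ) ≤ ((5 * q ^ 4 * ((n - k + 1) / 2) ^ 2 *
            (4 * ((n + k - 1) / k) ^ 2 - 1) ^ k * (n - k) ^ 2 : ℕ) : ℝ) := by exact_mod_cast h1
        _ = _ := by push_cast; ring
      have htR : (0 : ℝ) < (t.card : ℝ) := by exact_mod_cast htpos
      refine le_trans ?_ (le_trans hle ?_)
      · gcongr
      · exact_mod_cast hfc
    · rw [Finset.not_nonempty_iff_eq_empty] at hFne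
      have hIrr : (Irr (q := q) k n).ncard = 0 := by
        rw [Set.ncard_eq_toFinset_card _ hfin, ← hF, hFne, Finset.card_empty]
      refine ⟨fun _ => 0, fun _ => 0, 0, 0, 0, 0, 0, 0, 0, 0, 0,
        ⟨fun _ _ => Nat.zero_le _, fun _ _ => Nat.zero_le _, Nat.zero_le _, Nat.zero_le _,
          Nat.zero_le _, Nat.zero_le _, Nat.zero_le _, Nat.zero_le _, Nat.zero_le _,
          Nat.zero_le _, Nat.zero_le _⟩, ?_⟩
      rw [hIrr, Nat.cast_zero, zero_div]
      exact Nat.cast_nonneg _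


end NoisyDup
end

section
/- Let E be the set of single-error operations on binary strings consisting of: (0) the identity (no error); (1) deleting one bit; (2) inserting one bit; (3) flipping one bit; (4) flipping two adjacent bits; (5) replacing one bit by two adjacent bits via 0 → 11 or 1 → 00; (6) inserting the adjacent pair 11 at some position; (7) inserting the adjacent pair 00 at some position; (8) replacing an occurrence of 1 by 010. Then for any integers n ≥ 1, 0 ≤ a ≤ 2(n+1), 0 ≤ b ≤ 4, 0 ≤ c ≤ 2n, and any u, v ∈ C_{(a,b,c)}: if some binary word w can be obtained from u by one operation from E and also obtained from v by one operation from E, then u = v. That is, C_{(a,b,c)} corrects a single occurrence of any of these errors without a priori knowledge of the error type. -/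
namespace BinCode

/-- Hamming weight of a binary string. -/
def wt (u : List Bool) : ℕ := u.count true

/-- The VT syndrome `Σ_{i=1}^{|u|} i·u_i` (positions 1-indexed). -/
def vtSum (u : List Bool) : ℕ := (u.zipIdx.map fun p => if p.1 then p.2 + 1 else 0).sum

/-- `Σ_{i=1}^{|u|} i · (u_1 + ⋯ + u_i)`. -/
def wSum (u : List Bool) : ℕ :=
  ((List.range u.length).map fun i => (i + 1) * wt (u.take (i + 1))).sum

/-- The (variable-length) Varshamov–Tenengolts code `C_VT(α, m)`. -/
def CVT (α m : ℕ) : Set (List Bool) := {z | z.length ≤ m - 1 ∧ vtSum z % m = α}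

/-- The binary code `C_{(a,b,c)} ⊆ {0,1}^n`. -/
def Cabc (n a b c : ℕ) : Set (List Bool) :=
  {u | u.length = n ∧ vtSum u % (2 * n + 3) = a ∧ wt u % 5 = b ∧
    wSum u % (2 * n + 1) = c}

/-- `w` is obtained from `u` by deleting one bit. -/
def delBit (u w : List Bool) : Prop := ∃ i, i < u.length ∧ w = u.eraseIdx i

/-- `w` is obtained from `u` by inserting the bit `b` at some position. -/
def insBitAt (u w : List Bool) (b : Bool) : Prop :=
  ∃ i, i ≤ u.length ∧ w = u.take i ++ b :: u.drop i

/-- `w` is obtained from `u` by inserting one bit. -/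
def insBit (u w : List Bool) : Prop := ∃ b, insBitAt u w b

/-- Flip the bit at 0-based index `i`. -/
def flipAt (u : List Bool) (i : ℕ) : List Bool := u.set i (!(u.getD i false))

/-- `w` is obtained from `u` by flipping one bit. -/
def flip1 (u w : List Bool) : Prop := ∃ i, i < u.length ∧ w = flipAt u i

/-- `w` is obtained from `u` by flipping two adjacent bits. -/
def flip2 (u w : List Bool) : Prop :=
  ∃ i, i + 1 < u.length ∧ w = flipAt (flipAt u i) (i + 1)

/-- `w` is obtained from `u` by replacing one bit by two adjacent bits via
`0 → 11` or `1 → 00`. -/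
def expand1 (u w : List Bool) : Prop :=
  ∃ i, i < u.length ∧
    ((u.getD i false = false ∧ w = u.take i ++ true :: true :: u.drop (i + 1)) ∨
     (u.getD i false = true ∧ w = u.take i ++ false :: false :: u.drop (i + 1)))

/-- `w` is obtained from `u` by inserting the adjacent pair `b b`. -/
def insPair (u w : List Bool) (b : Bool) : Prop :=
  ∃ i, i ≤ u.length ∧ w = u.take i ++ b :: b :: u.drop i

/-- `w` is obtained from `u` by replacing an occurrence of `1` by `010`. -/
def oneTo010 (u w : List Bool) : Prop :=
  ∃ i, i < u.length ∧ u.getD i false = true ∧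
    w = u.take i ++ false :: true :: false :: u.drop (i + 1)


/-- The set `E` of single-error operations: identity, one-bit deletion, one-bit
insertion, one-bit flip, flipping two adjacent bits, `0 → 11` / `1 → 00`,
insertion of an adjacent pair `11` or `00`, and `1 → 010`. -/
def Eall (u w : List Bool) : Prop :=
  w = u ∨ delBit u w ∨ insBit u w ∨ flip1 u w ∨ flip2 u w ∨ expand1 u w ∨
    insPair u w true ∨ insPair u w false ∨ oneTo010 u w


/-- triangular numbers -/
def tri : ℕ → ℕ
  | 0 => 0
  | m+1 => tri m + m + 1

/-- sum of prefix weights -/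
def pf (u : List Bool) : ℕ := ((List.range u.length).map fun i => wt (u.take (i + 1))).sum

lemma wt_append (x y : List Bool) : wt (x ++ y) = wt x + wt y := List.count_append

lemma wt_snoc (x : List Bool) (b : Bool) : wt (x ++ [b]) = wt x + b.toNat := by
  rw [wt_append]; cases b <;> rfl

lemma vtSum_snoc (x : List Bool) (b : Bool) :
    vtSum (x ++ [b]) = vtSum x + (x.length + 1) * b.toNat := by
  unfold vtSum
  rw [List.zipIdx_append, List.map_append, List.sum_append]
  cases b <;> simp [List.zipIdx]

lemma pf_snoc (x : List Bool) (b : Bool) : pf (x ++ [b]) = pf x + wt x + b.toNat := by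
  unfold pf
  rw [List.length_append, List.length_singleton, List.range_succ, List.map_append,
    List.sum_append]
  have h1 : ∀ i ∈ List.range x.length,
      wt ((x ++ [b]).take (i+1)) = wt (x.take (i+1)) := by
    intro i hi
    rw [List.mem_range] at hi
    rw [List.take_append_of_le_length (by omega)]
  rw [List.map_congr_left h1]
  have h2 : (x ++ [b]).take (x.length + 1) = x ++ [b] := by
    apply List.take_of_length_le; simp
  simp [h2, wt_snoc, pf]; ring

lemma wSum_snoc (x : List Bool) (b : Bool) :
    wSum (x ++ [b]) = wSum x + (x.length + 1) * (wt x + b.toNat) := by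
  unfold wSum
  rw [List.length_append, List.length_singleton, List.range_succ, List.map_append,
    List.sum_append]
  have h1 : ∀ i ∈ List.range x.length,
      (i+1) * wt ((x ++ [b]).take (i+1)) = (i+1) * wt (x.take (i+1)) := by
    intro i hi
    rw [List.mem_range] at hi
    rw [List.take_append_of_le_length (by omega)]
  rw [List.map_congr_left h1]
  have h2 : (x ++ [b]).take (x.length + 1) = x ++ [b] := by
    apply List.take_of_length_le; simp
  simp [h2, wt_snoc, wSum]

lemma vtSum_append (x y : List Bool) :
    vtSum (x ++ y) = vtSum x + x.length * wt y + vtSum y := by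
  induction y using List.reverseRecOn with
  | nil => simp [wt, vtSum]
  | append_singleton y b ih =>
    rw [← List.append_assoc, vtSum_snoc, ih, vtSum_snoc, wt_snoc]
    simp [List.length_append]; ring

lemma pf_append (x y : List Bool) :
    pf (x ++ y) = pf x + y.length * wt x + pf y := by
  induction y using List.reverseRecOn with
  | nil => simp [wt, pf]
  | append_singleton y b ih =>
    rw [← List.append_assoc, pf_snoc, ih, pf_snoc, wt_append]
    simp [List.length_append]; ring

lemma wSum_append (x y : List Bool) :
    wSum (x ++ y) = wSum x + x.length * wt x * y.length + wt x * tri y.length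
      + x.length * pf y + wSum y := by
  induction y using List.reverseRecOn with
  | nil => simp [wSum, pf, tri]
  | append_singleton y b ih =>
    rw [← List.append_assoc, wSum_snoc, ih, wSum_snoc, wt_append]
    simp [List.length_append, pf_snoc, tri]
    ring

/-- helper: divisor with small remainder -/
lemma dvd_small {m d : ℤ} (h : m ∣ d) (h1 : -m < d) (h2 : d < m) : d = 0 := by
  rcases h with ⟨k, rfl⟩
  rcases lt_trichotomy k 0 with hk | hk | hk
  · nlinarith
  · simp [hk]
  · nlinarith

lemma take_of_app {w A C : List Bool} (h : w = A ++ C) : w.take A.length = A := by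
  subst h; exact List.take_left

lemma drop_of_app {w A C : List Bool} (h : w = A ++ C) : w.drop A.length = C := by
  subst h; exact List.drop_left

lemma B_of_app {w A p B : List Bool} (h : w = A ++ p ++ B) :
    B = w.drop (A.length + p.length) := by
  have h2 : w = (A ++ p) ++ B := by rw [h, List.append_assoc]
  rw [← List.length_append]; exact (drop_of_app h2).symm

/-- the master vt computation -/
lemma vt_master {w u v A B A' B' p q p' q' : List Bool}
    (h1 : w = A ++ p ++ B) (hu : u = A ++ q ++ B)
    (h2 : w = A' ++ p' ++ B') (hv : v = A' ++ q' ++ B') :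
    (vtSum u : ℤ) - vtSum v =
      (A.length : ℤ) * ((wt q : ℤ) - wt p) - (A'.length : ℤ) * ((wt q' : ℤ) - wt p')
      + ((vtSum q : ℤ) - vtSum p) - ((vtSum q' : ℤ) - vtSum p')
      + ((q.length : ℤ) - p.length) * wt B - ((q'.length : ℤ) - p'.length) * wt B' := by
  have e1 : vtSum (A ++ (p ++ B)) = vtSum (A' ++ (p' ++ B')) := by
    rw [← List.append_assoc, ← List.append_assoc, ← h1, ← h2]
  subst hu hv
  rw [List.append_assoc A q B, List.append_assoc A' q' B']
  simp only [vtSum_append, wt_append, List.length_append] at e1 ⊢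
  have e1' : ((vtSum A + A.length * (wt p + wt B) + (vtSum p + p.length * wt B + vtSum B)) : ℤ)
      = (vtSum A' + A'.length * (wt p' + wt B') + (vtSum p' + p'.length * wt B' + vtSum B')) := by
    exact_mod_cast congrArg (Nat.cast : ℕ → ℤ) e1
  push_cast
  linear_combination e1'

lemma wS_master {w u v A B A' B' p q : List Bool}
    (h1 : w = A ++ p ++ B) (hu : u = A ++ q ++ B)
    (h2 : w = A' ++ p ++ B') (hv : v = A' ++ q ++ B')
    (hW : wt q = wt p) (hL : q.length = p.length) :
    (wSum u : ℤ) - wSum v = ((A.length:ℤ) - A'.length) * ((pf q:ℤ) - pf p) := by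
  have e1 : wSum (A ++ (p ++ B)) = wSum (A' ++ (p ++ B')) := by
    rw [← List.append_assoc, ← List.append_assoc, ← h1, ← h2]
  subst hu hv
  rw [List.append_assoc A q B, List.append_assoc A' q B']
  simp only [wSum_append, pf_append, wt_append, List.length_append, hW, hL] at e1 ⊢
  have e1' := congrArg (Nat.cast : ℕ → ℤ) e1
  push_cast at e1' ⊢
  linear_combination e1'
lemma rep_comm (k l : ℕ) (x : Bool) :
    List.replicate k x ++ List.replicate l x = List.replicate l x ++ List.replicate k x := by
  rw [← List.replicate_add, ← List.replicate_add, Nat.add_comm]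

lemma rep_app (k l : ℕ) (x : Bool) (C : List Bool) :
    List.replicate k x ++ (List.replicate l x ++ C) = List.replicate (k + l) x ++ C := by
  rw [List.replicate_add, List.append_assoc]

/-- With two decompositions of w, the later B' is a tail of the earlier B. -/
lemma mid_split {w A B A' B' p p' : List Bool}
    (h1 : w = A ++ p ++ B) (h2 : w = A' ++ p' ++ B')
    (hij : A.length + p.length ≤ A'.length + p'.length) :
    B' = B.drop ((A'.length + p'.length) - (A.length + p.length)) := by
  rw [B_of_app h2, B_of_app h1, List.drop_drop]
  congr 1; omega

lemma wt_take_drop (B : List Bool) (D : ℕ) :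
    wt B = wt (B.take D) + wt (B.drop D) := by
  conv_lhs => rw [← List.take_append_drop D B]
  exact wt_append _ _

lemma take_all_false {B : List Bool} {D : ℕ} (hD : D ≤ B.length) (h : wt (B.take D) = 0) :
    B.take D = List.replicate D false := by
  rw [List.eq_replicate_iff]
  constructor
  · simp; omega
  · intro b hb
    rcases b with _ | _
    · rfl
    · exfalso; have := List.count_eq_zero.mp h; exact this hb

lemma take_all_true {B : List Bool} {D : ℕ} (hD : D ≤ B.length) (h : wt (B.take D) = D) :
    B.take D = List.replicate D true := by
  rw [List.eq_replicate_iff]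
  have hl : (B.take D).length = D := by simp; omega
  refine ⟨hl, fun b hb => ?_⟩
  have hc : List.count true (B.take D) = (B.take D).length := by rw [hl]; exact h
  exact (List.count_eq_length.mp hc b hb).symm

/-- the run-equality lemma -/
lemma same_of_run {w A B A' B' : List Bool} {x : Bool} {Lp Lq : ℕ}
    (h1 : w = A ++ List.replicate Lp x ++ B) (h2 : w = A' ++ List.replicate Lp x ++ B')
    (hij : A.length ≤ A'.length)
    (hconst : B.take (A'.length - A.length) = List.replicate (A'.length - A.length) x) :
    A ++ List.replicate Lq x ++ B = A' ++ List.replicate Lq x ++ B' := by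
  set D := A'.length - A.length with hD
  have hBB : B' = B.drop D := by
    have := mid_split h1 h2 (by simp; omega)
    rw [this]; congr 1; simp; omega
  have hB : B = List.replicate D x ++ B' := by
    rw [hBB, ← hconst, List.take_append_drop]
  have hA : A' = A ++ List.replicate D x := by
    have e : A ++ List.replicate Lp x ++ (List.replicate D x ++ B')
        = A' ++ List.replicate Lp x ++ B' := by rw [← hB, ← h1, h2]
    simp only [List.append_assoc] at e
    rw [rep_app, Nat.add_comm, ← rep_app, ← List.append_assoc] at e
    exact (List.append_cancel_right e).symm
  rw [hB, hA]
  simp only [List.append_assoc]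
  rw [rep_app, Nat.add_comm, ← rep_app]

lemma eq_of_same_pos {w A B A' B' p : List Bool}
    (h1 : w = A ++ p ++ B) (h2 : w = A' ++ p ++ B') (hl : A.length = A'.length) :
    A = A' ∧ B = B' := by
  have hA : A = A' := by
    have t1 := take_of_app (w := w) (C := p ++ B) (by rw [h1, List.append_assoc])
    have t2 := take_of_app (w := w) (C := p ++ B') (by rw [h2, List.append_assoc])
    rw [← t1, ← t2, hl]
  subst hA
  refine ⟨rfl, ?_⟩
  have h3 := h1.symm.trans h2
  rw [List.append_assoc, List.append_assoc] at h3
  exact List.append_cancel_left (List.append_cancel_left h3)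

lemma getD_concat (A C : List Bool) (x : Bool) :
    (A ++ x :: C).getD A.length false = x := by
  rw [List.getD_append_right _ _ _ _ (le_refl _)]
  simp

lemma set_concat (A C : List Bool) (x y : Bool) :
    (A ++ x :: C).set A.length y = A ++ y :: C := by
  induction A with
  | nil => rfl
  | cons a A ih => simpa [List.set] using ih

lemma wt_drop_le (w : List Bool) (r s : ℕ) (h : r ≤ s) :
    wt (w.drop s) ≤ wt (w.drop r) ∧ wt (w.drop r) ≤ wt (w.drop s) + (s - r) := by
  have h2 : (w.drop r).drop (s - r) = w.drop s := by
    rw [List.drop_drop]; congr 1; omega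
  have h3 := wt_take_drop (w.drop r) (s - r)
  rw [h2] at h3
  have h4 : wt ((w.drop r).take (s - r)) ≤ s - r :=
    le_trans (List.count_le_length) (by simp)
  omega

lemma getD_concat' (A C : List Bool) (x : Bool) {i : ℕ} (hi : i = A.length) :
    (A ++ x :: C).getD i false = x := by subst hi; exact getD_concat A C x

lemma set_concat' (A C : List Bool) (x y : Bool) {i : ℕ} (hi : i = A.length) :
    (A ++ x :: C).set i y = A ++ y :: C := by subst hi; exact set_concat A C x y

lemma split1 {u : List Bool} {i : ℕ} (h : i < u.length) :
    u = u.take i ++ [u.getD i false] ++ u.drop (i + 1) := by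
  rw [List.getD_eq_getElem _ _ h]
  conv_lhs => rw [← List.take_append_drop i u]
  rw [List.drop_eq_getElem_cons h]
  simp

lemma split2 {u : List Bool} {i : ℕ} (h : i + 1 < u.length) :
    u = u.take i ++ [u.getD i false, u.getD (i+1) false] ++ u.drop (i + 2) := by
  rw [List.getD_eq_getElem _ _ (by omega), List.getD_eq_getElem _ _ h]
  conv_lhs => rw [← List.take_append_drop i u]
  rw [List.drop_eq_getElem_cons (show i < u.length by omega),
    List.drop_eq_getElem_cons (show i + 1 < u.length by omega)]
  simp

lemma len_take {u : List Bool} {i : ℕ} (h : i ≤ u.length) : (u.take i).length = i := by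
  simp; omega

lemma conv_del {u w : List Bool} (h : delBit u w) :
    ∃ x A B, w = A ++ ([] : List Bool) ++ B ∧ u = A ++ [x] ++ B := by
  obtain ⟨i, hi, hw⟩ := h
  refine ⟨u.getD i false, u.take i, u.drop (i+1), ?_, split1 hi⟩
  rw [hw, List.eraseIdx_eq_take_drop_succ]; simp

lemma conv_ins {u w : List Bool} {b : Bool} (h : insBitAt u w b) :
    ∃ A B, w = A ++ [b] ++ B ∧ u = A ++ ([] : List Bool) ++ B := by
  obtain ⟨i, hi, hw⟩ := h
  exact ⟨u.take i, u.drop i, by simpa using hw, by simp⟩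

lemma conv_flip1 {u w : List Bool} (h : flip1 u w) :
    ∃ x A B, w = A ++ [x] ++ B ∧ u = A ++ [!x] ++ B := by
  obtain ⟨i, hi, hw⟩ := h
  refine ⟨!(u.getD i false), u.take i, u.drop (i+1), ?_,
    by rw [Bool.not_not]; exact split1 hi⟩
  rw [hw]
  unfold flipAt
  have hl : (u.take i).length = i := len_take (le_of_lt hi)
  have hu' : u = u.take i ++ (u.getD i false) :: u.drop (i+1) := by
    simpa using split1 hi
  conv_lhs => rw [hu']
  rw [getD_concat' _ _ _ hl.symm, set_concat' _ _ _ _ hl.symm]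
  simp

lemma conv_flip2 {u w : List Bool} (h : flip2 u w) :
    ∃ x y A B, w = A ++ [x, y] ++ B ∧ u = A ++ [!x, !y] ++ B := by
  obtain ⟨i, hi, hw⟩ := h
  have hl : (u.take i).length = i := len_take (by omega)
  have hu : u = u.take i ++ [u.getD i false, u.getD (i+1) false] ++ u.drop (i+2) :=
    split2 hi
  have hu' : u = u.take i ++ (u.getD i false) ::
      ((u.getD (i+1) false) :: u.drop (i+2)) := by simpa using hu
  have h1 : flipAt u i = u.take i ++ (!(u.getD i false)) ::
      ((u.getD (i+1) false) :: u.drop (i+2)) := by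
    unfold flipAt
    conv_lhs => rw [hu']
    rw [getD_concat' _ _ _ hl.symm, set_concat' _ _ _ _ hl.symm]
  have hl2 : i + 1 = (u.take i ++ [!(u.getD i false)]).length := by simp [hl]
  have h2 : w = u.take i ++ [!(u.getD i false), !(u.getD (i+1) false)] ++ u.drop (i+2) := by
    rw [hw, h1]
    unfold flipAt
    rw [show u.take i ++ (!(u.getD i false)) :: ((u.getD (i+1) false) :: u.drop (i+2))
        = (u.take i ++ [!(u.getD i false)]) ++ (u.getD (i+1) false) :: u.drop (i+2) by simp]
    rw [getD_concat' _ _ _ hl2, set_concat' _ _ _ _ hl2]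
    simp
  exact ⟨!(u.getD i false), !(u.getD (i+1) false), u.take i, u.drop (i+2), h2,
    by rw [Bool.not_not, Bool.not_not]; exact hu⟩

lemma conv_expand {u w : List Bool} (h : expand1 u w) :
    (∃ A B, w = A ++ [true, true] ++ B ∧ u = A ++ [false] ++ B) ∨
    (∃ A B, w = A ++ [false, false] ++ B ∧ u = A ++ [true] ++ B) := by
  obtain ⟨i, hi, h | h⟩ := h
  · left
    refine ⟨u.take i, u.drop (i+1), by simpa using h.2, ?_⟩
    have := split1 hi; rw [h.1] at this; exact this
  · right
    refine ⟨u.take i, u.drop (i+1), by simpa using h.2, ?_⟩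
    have := split1 hi; rw [h.1] at this; exact this

lemma conv_pair {u w : List Bool} {b : Bool} (h : insPair u w b) :
    ∃ A B, w = A ++ [b, b] ++ B ∧ u = A ++ ([] : List Bool) ++ B := by
  obtain ⟨i, hi, hw⟩ := h
  exact ⟨u.take i, u.drop i, by simpa using hw, by simp⟩

lemma conv_010 {u w : List Bool} (h : oneTo010 u w) :
    ∃ A B, w = A ++ [false, true, false] ++ B ∧ u = A ++ [true] ++ B := by
  obtain ⟨i, hi, hg, hw⟩ := h
  refine ⟨u.take i, u.drop (i+1), by simpa using hw, ?_⟩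
  have := split1 hi; rw [hg] at this; exact this


lemma wt_rep (k : ℕ) (x : Bool) : wt (List.replicate k x) = k * x.toNat := by
  cases x <;> simp [wt, List.count_replicate]

/-- F1 : same replicate-shape at both positions; run argument. -/
lemma F1core {n : ℕ} (x : Bool) (Lp Lq : ℕ) {w u v A1 B1 A2 B2 : List Bool}
    (hpq : Lp ≠ Lq) (hp2 : Lp ≤ 2) (hq2 : Lq ≤ 2)
    (e1 : w = A1 ++ List.replicate Lp x ++ B1) (f1 : u = A1 ++ List.replicate Lq x ++ B1)
    (e2 : w = A2 ++ List.replicate Lp x ++ B2) (f2 : v = A2 ++ List.replicate Lq x ++ B2)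
    (hvt : (2*(n:ℤ)+3) ∣ (vtSum u : ℤ) - vtSum v)
    (hm : 2 * w.length ≤ 2*n + 2 + 2*Lp)
    (hij : A1.length ≤ A2.length) : u = v := by
  have l1 := congrArg List.length e1
  have l2 := congrArg List.length e2
  simp only [List.length_append, List.length_replicate] at l1 l2
  set D := A2.length - A1.length with hDdef
  have hBB : B2 = B1.drop D := by
    have h := mid_split e1 e2 (by simp only [List.length_replicate]; omega)
    rw [h]; congr 1; simp only [List.length_replicate]; omega
  set T := wt (B1.take D) with hTdef
  have hsp : wt B1 = T + wt B2 := by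
    conv_lhs => rw [wt_take_drop B1 D]
    rw [← hBB]
  have ht : T ≤ D := le_trans (List.count_le_length) (by simp)
  have hDB : D ≤ B1.length := by omega
  have hd := vt_master e1 f1 e2 f2
  simp only [wt_rep, List.length_replicate] at hd
  have hD' : ((D : ℕ) : ℤ) = (A2.length:ℤ) - A1.length := by omega
  have hsp' : (wt B1:ℤ) = (T:ℤ) + wt B2 := by exact_mod_cast hsp
  have key : (vtSum u : ℤ) - vtSum v = ((Lq:ℤ) - Lp) * ((T : ℤ) - (D : ℤ) * x.toNat) := by
    rw [hd]
    push_cast at hsp' ⊢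
    rw [hD']
    linear_combination (((Lq:ℤ) - Lp)) * hsp'
  have hc : |(Lq:ℤ) - Lp| ≤ 2 := abs_le.mpr ⟨by omega, by omega⟩
  have hs : |(T : ℤ) - (D : ℤ) * x.toNat| ≤ (D:ℤ) := by
    apply abs_le.mpr
    cases x <;> simp <;> omega
  have habs : |((Lq:ℤ) - Lp) * ((T : ℤ) - (D : ℤ) * x.toNat)| ≤ 2 * D := by
    rw [abs_mul]
    exact mul_le_mul hc hs (abs_nonneg _) (by norm_num)
  have hD2 : 2 * ((D : ℕ):ℤ) < 2*n+3 := by omega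
  have h0 : ((Lq:ℤ) - Lp) * ((T : ℤ) - (D : ℤ) * x.toNat) = 0 := by
    refine dvd_small (key ▸ hvt) ?_ ?_
    · have := abs_le.mp habs; omega
    · have := abs_le.mp habs; omega
  rcases mul_eq_zero.mp h0 with hcz | hsz
  · exfalso; omega
  · have htval : T = D * x.toNat := by
      have : (T:ℤ) = (D:ℤ) * x.toNat := by omega
      exact_mod_cast this
    have hconst : B1.take D = List.replicate D x := by
      cases x
      · exact take_all_false hDB (by simpa using htval)
      · exact take_all_true hDB (by simpa using htval)
    rw [f1, f2]
    exact same_of_run e1 e2 hij hconst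

lemma F1 {n : ℕ} (x : Bool) (Lp Lq : ℕ) {w u v A1 B1 A2 B2 : List Bool}
    (hpq : Lp ≠ Lq) (hp2 : Lp ≤ 2) (hq2 : Lq ≤ 2)
    (e1 : w = A1 ++ List.replicate Lp x ++ B1) (f1 : u = A1 ++ List.replicate Lq x ++ B1)
    (e2 : w = A2 ++ List.replicate Lp x ++ B2) (f2 : v = A2 ++ List.replicate Lq x ++ B2)
    (hvt : (2*(n:ℤ)+3) ∣ (vtSum u : ℤ) - vtSum v)
    (hm : 2 * w.length ≤ 2*n + 2 + 2*Lp) : u = v := by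
  rcases le_total A1.length A2.length with h | h
  · exact F1core x Lp Lq hpq hp2 hq2 e1 f1 e2 f2 hvt hm h
  · exact (F1core x Lp Lq hpq hp2 hq2 e2 f2 e1 f1 (dvd_sub_comm.mp hvt) hm h).symm


/-- F2 : same shape, same length, different weight: positions must agree. -/
lemma F2 {n : ℕ} {w u v A1 B1 A2 B2 p q : List Bool}
    (hL : q.length = p.length) (hW : wt q ≠ wt p) (hWp : wt p ≤ 2) (hWq : wt q ≤ 2)
    (e1 : w = A1 ++ p ++ B1) (f1 : u = A1 ++ q ++ B1)
    (e2 : w = A2 ++ p ++ B2) (f2 : v = A2 ++ q ++ B2)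
    (hvt : (2*(n:ℤ)+3) ∣ (vtSum u : ℤ) - vtSum v)
    (hm : 2 * w.length ≤ 2*n + 2 + 2*p.length) : u = v := by
  have l1 := congrArg List.length e1
  have l2 := congrArg List.length e2
  simp only [List.length_append] at l1 l2
  have hd := vt_master e1 f1 e2 f2
  simp only [hL] at hd
  have key : (vtSum u : ℤ) - vtSum v
      = ((A1.length:ℤ) - A2.length) * ((wt q:ℤ) - wt p) := by rw [hd]; ring
  have hc : |(wt q:ℤ) - wt p| ≤ 2 := abs_le.mpr ⟨by omega, by omega⟩
  have hij : |(A1.length:ℤ) - A2.length| ≤ (w.length:ℤ) - p.length :=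
    abs_le.mpr ⟨by omega, by omega⟩
  have habs : |((A1.length:ℤ) - A2.length) * ((wt q:ℤ) - wt p)|
      ≤ ((w.length:ℤ) - p.length) * 2 := by
    rw [abs_mul]
    exact mul_le_mul hij hc (abs_nonneg _) (by omega)
  have h0 : ((A1.length:ℤ) - A2.length) * ((wt q:ℤ) - wt p) = 0 := by
    refine dvd_small (key ▸ hvt) ?_ ?_ <;> (have := abs_le.mp habs; omega)
  rcases mul_eq_zero.mp h0 with hz | hz
  · obtain ⟨hA, hB⟩ := eq_of_same_pos e1 e2 (by omega)
    rw [f1, f2, hA, hB]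
  · exfalso
    have : wt q = wt p := by omega
    exact hW this

/-- F3 : same shape with length drop 1, weight change -2 or +1. -/
lemma F3core {n : ℕ} {w u v A1 B1 A2 B2 p q : List Bool}
    (hL : p.length = q.length + 1)
    (hcw : ((wt q:ℤ) - wt p = -2) ∨ ((wt q:ℤ) - wt p = 1))
    (e1 : w = A1 ++ p ++ B1) (f1 : u = A1 ++ q ++ B1)
    (e2 : w = A2 ++ p ++ B2) (f2 : v = A2 ++ q ++ B2)
    (hvt : (2*(n:ℤ)+3) ∣ (vtSum u : ℤ) - vtSum v)
    (hm : 2 * w.length ≤ 2*n + 2 + 2*p.length)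
    (hij : A1.length ≤ A2.length) : u = v := by
  have l1 := congrArg List.length e1
  have l2 := congrArg List.length e2
  simp only [List.length_append] at l1 l2
  set D := A2.length - A1.length with hDdef
  have hBB : B2 = B1.drop D := by
    have h := mid_split e1 e2 (by omega)
    rw [h]; congr 1; omega
  set T := wt (B1.take D) with hTdef
  have hsp : wt B1 = T + wt B2 := by
    conv_lhs => rw [wt_take_drop B1 D]
    rw [← hBB]
  have ht : T ≤ D := le_trans (List.count_le_length) (by simp)
  have hsp' : (wt B1:ℤ) = (T:ℤ) + wt B2 := by exact_mod_cast hsp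
  have hd := vt_master e1 f1 e2 f2
  have key : (vtSum u : ℤ) - vtSum v
      = ((A1.length:ℤ) - A2.length) * ((wt q:ℤ) - wt p) - T := by
    rw [hd]
    have : (q.length:ℤ) - p.length = -1 := by omega
    rw [this]
    linear_combination (-1 : ℤ) * hsp'
  have hDand : (D:ℤ) = (A2.length:ℤ) - A1.length := by omega
  have h0 : ((A1.length:ℤ) - A2.length) * ((wt q:ℤ) - wt p) - T = 0 := by
    refine dvd_small (key ▸ hvt) ?_ ?_ <;> (rcases hcw with hc | hc <;> rw [hc] <;> omega)
  rcases hcw with hc | hc <;> rw [hc] at h0 <;>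
  · obtain ⟨hA, hB⟩ := eq_of_same_pos e1 e2 (by omega)
    rw [f1, f2, hA, hB]

lemma F3 {n : ℕ} {w u v A1 B1 A2 B2 p q : List Bool}
    (hL : p.length = q.length + 1)
    (hcw : ((wt q:ℤ) - wt p = -2) ∨ ((wt q:ℤ) - wt p = 1))
    (e1 : w = A1 ++ p ++ B1) (f1 : u = A1 ++ q ++ B1)
    (e2 : w = A2 ++ p ++ B2) (f2 : v = A2 ++ q ++ B2)
    (hvt : (2*(n:ℤ)+3) ∣ (vtSum u : ℤ) - vtSum v)
    (hm : 2 * w.length ≤ 2*n + 2 + 2*p.length) : u = v := by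
  rcases le_total A1.length A2.length with h | h
  · exact F3core hL hcw e1 f1 e2 f2 hvt hm h
  · exact (F3core hL hcw e2 f2 e1 f1 (dvd_sub_comm.mp hvt) hm h).symm

/-- F4 : same shape, same length and weight, different pf: use wSum. -/
lemma F4 {n : ℕ} {w u v A1 B1 A2 B2 p q : List Bool}
    (hL : q.length = p.length) (hW : wt q = wt p)
    (hpf : ((pf q:ℤ) - pf p = 1) ∨ ((pf q:ℤ) - pf p = -1))
    (e1 : w = A1 ++ p ++ B1) (f1 : u = A1 ++ q ++ B1)
    (e2 : w = A2 ++ p ++ B2) (f2 : v = A2 ++ q ++ B2)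
    (hws : (2*(n:ℤ)+1) ∣ (wSum u : ℤ) - wSum v)
    (hm : w.length ≤ 2*n) : u = v := by
  have l1 := congrArg List.length e1
  have l2 := congrArg List.length e2
  simp only [List.length_append] at l1 l2
  have key := wS_master e1 f1 e2 f2 hW hL
  have h0 : ((A1.length:ℤ) - A2.length) * ((pf q:ℤ) - pf p) = 0 := by
    refine dvd_small (key ▸ hws) ?_ ?_ <;> (rcases hpf with hc | hc <;> rw [hc] <;> omega)
  rcases hpf with hc | hc <;> rw [hc] at h0 <;>
  · obtain ⟨hA, hB⟩ := eq_of_same_pos e1 e2 (by omega)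
    rw [f1, f2, hA, hB]

/-- Fcontra : same lengths/weights on both sides but different inner vt syndromes. -/
lemma Fcontra {n : ℕ} (hn : 1 ≤ n) {w u v A1 B1 A2 B2 p1 q1 p2 q2 : List Bool}
    (hL1 : q1.length = p1.length) (hW1 : wt q1 = wt p1)
    (hL2 : q2.length = p2.length) (hW2 : wt q2 = wt p2)
    (e1 : w = A1 ++ p1 ++ B1) (f1 : u = A1 ++ q1 ++ B1)
    (e2 : w = A2 ++ p2 ++ B2) (f2 : v = A2 ++ q2 ++ B2)
    (hvt : (2*(n:ℤ)+3) ∣ (vtSum u : ℤ) - vtSum v)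
    (hS : ((vtSum q1:ℤ) - vtSum p1) - ((vtSum q2:ℤ) - vtSum p2) ≠ 0)
    (hSb : -4 ≤ ((vtSum q1:ℤ) - vtSum p1) - ((vtSum q2:ℤ) - vtSum p2) ∧
        ((vtSum q1:ℤ) - vtSum p1) - ((vtSum q2:ℤ) - vtSum p2) ≤ 4) : u = v := by
  exfalso
  have hd := vt_master e1 f1 e2 f2
  simp only [hL1, hW1, hL2, hW2] at hd
  have key : (vtSum u : ℤ) - vtSum v
      = ((vtSum q1:ℤ) - vtSum p1) - ((vtSum q2:ℤ) - vtSum p2) := by rw [hd]; ring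
  have h0 := dvd_small (key ▸ hvt) (by omega) (by omega)
  exact hS h0



lemma getD_rep (D k : ℕ) : (List.replicate D false).getD k false = false := by
  rcases lt_or_ge k D with h | h
  · rw [List.getD_eq_getElem _ _ (by simpa using h)]
    exact List.getElem_replicate _
  · exact List.getD_eq_default _ _ (by simpa using h)

/-- F5 : both sides are 010 ← 1 decodings. -/
lemma F5core {n : ℕ} {w u v A1 B1 A2 B2 : List Bool}
    (e1 : w = A1 ++ [false,true,false] ++ B1) (f1 : u = A1 ++ [true] ++ B1)
    (e2 : w = A2 ++ [false,true,false] ++ B2) (f2 : v = A2 ++ [true] ++ B2)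
    (hvt : (2*(n:ℤ)+3) ∣ (vtSum u : ℤ) - vtSum v)
    (hm : 2 * w.length ≤ 2*n + 8)
    (hij : A1.length ≤ A2.length) : u = v := by
  have l1 := congrArg List.length e1
  have l2 := congrArg List.length e2
  simp only [List.length_append, List.length_cons, List.length_nil] at l1 l2
  set D := A2.length - A1.length with hDdef
  have hBB : B2 = B1.drop D := by
    have h := mid_split e1 e2 (by simp only [List.length_cons, List.length_nil]; omega)
    rw [h]; congr 1; simp only [List.length_cons, List.length_nil]; omega
  set T := wt (B1.take D) with hTdef
  have hsp : wt B1 = T + wt B2 := by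
    conv_lhs => rw [wt_take_drop B1 D]
    rw [← hBB]
  have ht : T ≤ D := le_trans (List.count_le_length) (by simp)
  have hDB : D ≤ B1.length := by omega
  have hsp' : (wt B1:ℤ) = (T:ℤ) + wt B2 := by exact_mod_cast hsp
  have hd := vt_master e1 f1 e2 f2
  have c1 : wt [false,true,false] = 1 := by decide
  have c2 : wt [true] = 1 := by decide
  have c3 : vtSum [false,true,false] = 2 := by decide +kernel
  have c4 : vtSum [true] = 1 := by decide +kernel
  rw [c1, c2, c3, c4] at hd
  have key : (vtSum u : ℤ) - vtSum v = -2 * (T:ℤ) := by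
    rw [hd]
    simp only [List.length_cons, List.length_nil]
    push_cast
    linear_combination (-2 : ℤ) * hsp'
  have h0 : (-2 : ℤ) * (T:ℤ) = 0 := dvd_small (key ▸ hvt) (by omega) (by omega)
  have hT0 : T = 0 := by omega
  have hconst : B1.take D = List.replicate D false :=
    take_all_false hDB (hTdef.symm.trans hT0)
  by_cases hD0 : D = 0
  · obtain ⟨hA, hB⟩ := eq_of_same_pos e1 e2 (by omega)
    rw [f1, f2, hA, hB]
  by_cases hD1 : D = 1
  · exfalso
    have g1 : w.getD (A1.length + 1) false = true := by
      have hrw : w = (A1 ++ [false]) ++ true :: ([false] ++ B1) := by rw [e1]; simp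
      rw [hrw]
      exact getD_concat' _ _ _ (by simp)
    have g2 : w.getD A2.length false = false := by
      have hrw : w = A2 ++ false :: ([true, false] ++ B2) := by rw [e2]; simp
      rw [hrw]
      exact getD_concat' _ _ _ rfl
    have : A2.length = A1.length + 1 := by omega
    rw [this] at g2
    rw [g1] at g2
    exact Bool.noConfusion g2
  · exfalso
    have hD2 : 2 ≤ D := by omega
    have g1 : w.getD (A2.length + 1) false = true := by
      have hrw : w = (A2 ++ [false]) ++ true :: ([false] ++ B2) := by rw [e2]; simp
      rw [hrw]
      exact getD_concat' _ _ _ (by simp)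
    have g2 : w.getD (A1.length + 3 + (D - 2)) false = false := by
      have hrw : w = (A1 ++ [false, true, false]) ++ B1 := by rw [e1]
      rw [hrw]
      rw [List.getD_append_right _ _ _ _
        (by simp only [List.length_append, List.length_cons, List.length_nil]; omega)]
      have hidx : A1.length + 3 + (D - 2) - (A1 ++ [false, true, false]).length = D - 2 := by
        simp only [List.length_append, List.length_cons, List.length_nil]; omega
      rw [hidx]
      conv_lhs => rw [← List.take_append_drop D B1]
      rw [List.getD_append _ _ _ _ (by simp only [List.length_take]; omega), hconst]
      exact getD_rep _ _
    have : A1.length + 3 + (D - 2) = A2.length + 1 := by omega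
    rw [this, g1] at g2
    exact Bool.noConfusion g2

lemma F5 {n : ℕ} {w u v A1 B1 A2 B2 : List Bool}
    (e1 : w = A1 ++ [false,true,false] ++ B1) (f1 : u = A1 ++ [true] ++ B1)
    (e2 : w = A2 ++ [false,true,false] ++ B2) (f2 : v = A2 ++ [true] ++ B2)
    (hvt : (2*(n:ℤ)+3) ∣ (vtSum u : ℤ) - vtSum v)
    (hm : 2 * w.length ≤ 2*n + 8) : u = v := by
  rcases le_total A1.length A2.length with h | h
  · exact F5core e1 f1 e2 f2 hvt hm h
  · exact (F5core e2 f2 e1 f1 (dvd_sub_comm.mp hvt) hm h).symm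

/-- F6 : 00-pair insertion vs 1→010 is impossible. -/
lemma F6 {n : ℕ} (hn : 1 ≤ n) {w u v A1 B1 A2 B2 : List Bool}
    (e1 : w = A1 ++ [false,false] ++ B1) (f1 : u = A1 ++ ([] : List Bool) ++ B1)
    (e2 : w = A2 ++ [false,true,false] ++ B2) (f2 : v = A2 ++ [true] ++ B2)
    (hvt : (2*(n:ℤ)+3) ∣ (vtSum u : ℤ) - vtSum v)
    (hm : w.length ≤ n + 2) : u = v := by
  exfalso
  have l1 := congrArg List.length e1
  have l2 := congrArg List.length e2
  simp only [List.length_append, List.length_cons, List.length_nil] at l1 l2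
  have hB1 : B1 = w.drop (A1.length + 2) := by
    have := B_of_app e1; simpa using this
  have hB2 : B2 = w.drop (A2.length + 3) := by
    have := B_of_app e2; simpa using this
  have hd := vt_master e1 f1 e2 f2
  have c1 : wt [false,false] = 0 := by decide
  have c2 : wt [false,true,false] = 1 := by decide
  have c3 : wt [true] = 1 := by decide
  have c4 : wt ([] : List Bool) = 0 := by decide
  have c5 : vtSum [false,false] = 0 := by decide +kernel
  have c6 : vtSum [false,true,false] = 2 := by decide +kernel
  have c7 : vtSum [true] = 1 := by decide +kernel
  have c8 : vtSum ([] : List Bool) = 0 := by decide +kernel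
  rw [c1, c2, c3, c4, c5, c6, c7, c8] at hd
  have key : (vtSum u : ℤ) - vtSum v = 1 - 2 * (wt B1:ℤ) + 2 * (wt B2:ℤ) := by
    rw [hd]
    simp only [List.length_cons, List.length_nil]
    push_cast
    ring
  have h0 : (1 : ℤ) - 2 * (wt B1:ℤ) + 2 * (wt B2:ℤ) = 0 := by
    rcases le_total (A1.length + 2) (A2.length + 3) with h | h
    · have hw := wt_drop_le w (A1.length + 2) (A2.length + 3) h
      rw [← hB1, ← hB2] at hw
      exact dvd_small (key ▸ hvt) (by omega) (by omega)
    · have hw := wt_drop_le w (A2.length + 3) (A1.length + 2) h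
      rw [← hB1, ← hB2] at hw
      exact dvd_small (key ▸ hvt) (by omega) (by omega)
  omega


lemma wt_nil : wt ([] : List Bool) = 0 := rfl
lemma wt_cons_t (l : List Bool) : wt (true :: l) = wt l + 1 := by
  simp [wt, List.count_cons]
lemma wt_cons_f (l : List Bool) : wt (false :: l) = wt l := by
  simp [wt, List.count_cons]

/-- the 16 possible (pattern-in-w, pattern-in-u) shapes -/
def Shape (p q : List Bool) : Prop :=
  (p = [] ∧ q = []) ∨
  (p = [] ∧ q = [false]) ∨ (p = [] ∧ q = [true]) ∨
  (p = [false] ∧ q = []) ∨ (p = [true] ∧ q = []) ∨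
  (p = [false] ∧ q = [true]) ∨ (p = [true] ∧ q = [false]) ∨
  (p = [false,false] ∧ q = [true,true]) ∨ (p = [true,true] ∧ q = [false,false]) ∨
  (p = [false,true] ∧ q = [true,false]) ∨ (p = [true,false] ∧ q = [false,true]) ∨
  (p = [true,true] ∧ q = [false]) ∨ (p = [false,false] ∧ q = [true]) ∨
  (p = [true,true] ∧ q = []) ∨ (p = [false,false] ∧ q = []) ∨
  (p = [false,true,false] ∧ q = [true])

set_option maxHeartbeats 3000000 in
lemma crux (n : ℕ) (hn : 1 ≤ n) {w u v A1 B1 A2 B2 p1 q1 p2 q2 : List Bool}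
    (e1 : w = A1 ++ p1 ++ B1) (f1 : u = A1 ++ q1 ++ B1)
    (e2 : w = A2 ++ p2 ++ B2) (f2 : v = A2 ++ q2 ++ B2)
    (s1 : Shape p1 q1) (s2 : Shape p2 q2)
    (hlu : u.length = n) (hlv : v.length = n)
    (h5 : (5:ℤ) ∣ (wt u:ℤ) - wt v)
    (hvt : (2*(n:ℤ)+3) ∣ (vtSum u : ℤ) - vtSum v)
    (hws : (2*(n:ℤ)+1) ∣ (wSum u : ℤ) - wSum v) : u = v := by
  rcases s1 with ⟨rfl, rfl⟩ | ⟨rfl, rfl⟩ | ⟨rfl, rfl⟩ | ⟨rfl, rfl⟩ | ⟨rfl, rfl⟩ | ⟨rfl, rfl⟩ |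
    ⟨rfl, rfl⟩ | ⟨rfl, rfl⟩ | ⟨rfl, rfl⟩ | ⟨rfl, rfl⟩ | ⟨rfl, rfl⟩ | ⟨rfl, rfl⟩ | ⟨rfl, rfl⟩ |
    ⟨rfl, rfl⟩ | ⟨rfl, rfl⟩ | ⟨rfl, rfl⟩ <;>
  rcases s2 with ⟨rfl, rfl⟩ | ⟨rfl, rfl⟩ | ⟨rfl, rfl⟩ | ⟨rfl, rfl⟩ | ⟨rfl, rfl⟩ | ⟨rfl, rfl⟩ |
    ⟨rfl, rfl⟩ | ⟨rfl, rfl⟩ | ⟨rfl, rfl⟩ | ⟨rfl, rfl⟩ | ⟨rfl, rfl⟩ | ⟨rfl, rfl⟩ | ⟨rfl, rfl⟩ |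
    ⟨rfl, rfl⟩ | ⟨rfl, rfl⟩ | ⟨rfl, rfl⟩ <;>
  (first
    | exact (f1.trans e1.symm).trans (f2.trans e2.symm).symm
    | (exfalso;
       have L1 := congrArg List.length e1;
       have L2 := congrArg List.length e2;
       have L3 := congrArg List.length f1;
       have L4 := congrArg List.length f2;
       simp only [List.length_append, List.length_cons, List.length_nil] at L1 L2 L3 L4;
       omega)
    | (exfalso;
       have M1 := congrArg wt e1;
       have M2 := congrArg wt e2;
       have M3 := congrArg wt f1;
       have M4 := congrArg wt f2;
       simp only [wt_append, wt_cons_t, wt_cons_f, wt_nil] at M1 M2 M3 M4;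
       omega)
    | (have L1 := congrArg List.length e1;
       have L2 := congrArg List.length e2;
       have L3 := congrArg List.length f1;
       have L4 := congrArg List.length f2;
       simp only [List.length_append, List.length_cons, List.length_nil] at L1 L2 L3 L4;
       first
       | exact F1 (n := n) false 0 1 (by omega) (by omega) (by omega) e1 f1 e2 f2 hvt (by omega)
       | exact F1 (n := n) true 0 1 (by omega) (by omega) (by omega) e1 f1 e2 f2 hvt (by omega)
       | exact F1 (n := n) false 1 0 (by omega) (by omega) (by omega) e1 f1 e2 f2 hvt (by omega)
       | exact F1 (n := n) true 1 0 (by omega) (by omega) (by omega) e1 f1 e2 f2 hvt (by omega)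
       | exact F1 (n := n) false 2 0 (by omega) (by omega) (by omega) e1 f1 e2 f2 hvt (by omega)
       | exact F1 (n := n) true 2 0 (by omega) (by omega) (by omega) e1 f1 e2 f2 hvt (by omega)
       | exact F2 (n := n) (by decide) (by decide) (by decide) (by decide) e1 f1 e2 f2 hvt (by omega)
       | exact F3 (n := n) (by decide) (Or.inl (by decide)) e1 f1 e2 f2 hvt (by omega)
       | exact F3 (n := n) (by decide) (Or.inr (by decide)) e1 f1 e2 f2 hvt (by omega)
       | exact F4 (n := n) (by decide) (by decide) (Or.inl (by decide)) e1 f1 e2 f2 hws (by omega)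
       | exact F4 (n := n) (by decide) (by decide) (Or.inr (by decide)) e1 f1 e2 f2 hws (by omega)
       | exact F5 (n := n) e1 f1 e2 f2 hvt (by omega)
       | exact F6 (n := n) hn e1 f1 e2 f2 hvt (by omega)
       | exact (F6 (n := n) hn e2 f2 e1 f1 (dvd_sub_comm.mp hvt) (by omega)).symm
       | exact Fcontra (n := n) hn (by decide) (by decide) (by decide) (by decide)
           e1 f1 e2 f2 hvt (by decide +kernel) (by decide +kernel)))

lemma shape1 : Shape [] [] := Or.inl ⟨rfl, rfl⟩
lemma shape2 : Shape [] [false] := Or.inr (Or.inl ⟨rfl, rfl⟩)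
lemma shape3 : Shape [] [true] := Or.inr (Or.inr (Or.inl ⟨rfl, rfl⟩))
lemma shape4 : Shape [false] [] := Or.inr (Or.inr (Or.inr (Or.inl ⟨rfl, rfl⟩)))
lemma shape5 : Shape [true] [] := Or.inr (Or.inr (Or.inr (Or.inr (Or.inl ⟨rfl, rfl⟩))))
lemma shape6 : Shape [false] [true] := Or.inr (Or.inr (Or.inr (Or.inr (Or.inr (Or.inl ⟨rfl, rfl⟩)))))
lemma shape7 : Shape [true] [false] := Or.inr (Or.inr (Or.inr (Or.inr (Or.inr (Or.inr (Or.inl ⟨rfl, rfl⟩))))))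
lemma shape8 : Shape [false,false] [true,true] := Or.inr (Or.inr (Or.inr (Or.inr (Or.inr (Or.inr (Or.inr (Or.inl ⟨rfl, rfl⟩)))))))
lemma shape9 : Shape [true,true] [false,false] := Or.inr (Or.inr (Or.inr (Or.inr (Or.inr (Or.inr (Or.inr (Or.inr (Or.inl ⟨rfl, rfl⟩))))))))
lemma shape10 : Shape [false,true] [true,false] := Or.inr (Or.inr (Or.inr (Or.inr (Or.inr (Or.inr (Or.inr (Or.inr (Or.inr (Or.inl ⟨rfl, rfl⟩)))))))))
lemma shape11 : Shape [true,false] [false,true] := Or.inr (Or.inr (Or.inr (Or.inr (Or.inr (Or.inr (Or.inr (Or.inr (Or.inr (Or.inr (Or.inl ⟨rfl, rfl⟩))))))))))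
lemma shape12 : Shape [true,true] [false] := Or.inr (Or.inr (Or.inr (Or.inr (Or.inr (Or.inr (Or.inr (Or.inr (Or.inr (Or.inr (Or.inr (Or.inl ⟨rfl, rfl⟩)))))))))))
lemma shape13 : Shape [false,false] [true] := Or.inr (Or.inr (Or.inr (Or.inr (Or.inr (Or.inr (Or.inr (Or.inr (Or.inr (Or.inr (Or.inr (Or.inr (Or.inl ⟨rfl, rfl⟩))))))))))))
lemma shape14 : Shape [true,true] [] := Or.inr (Or.inr (Or.inr (Or.inr (Or.inr (Or.inr (Or.inr (Or.inr (Or.inr (Or.inr (Or.inr (Or.inr (Or.inr (Or.inl ⟨rfl, rfl⟩)))))))))))))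
lemma shape15 : Shape [false,false] [] := Or.inr (Or.inr (Or.inr (Or.inr (Or.inr (Or.inr (Or.inr (Or.inr (Or.inr (Or.inr (Or.inr (Or.inr (Or.inr (Or.inr (Or.inl ⟨rfl, rfl⟩))))))))))))))
lemma shape16 : Shape [false,true,false] [true] := Or.inr (Or.inr (Or.inr (Or.inr (Or.inr (Or.inr (Or.inr (Or.inr (Or.inr (Or.inr (Or.inr (Or.inr (Or.inr (Or.inr (Or.inr (⟨rfl, rfl⟩)))))))))))))))

lemma EallShape {u w : List Bool} (h : Eall u w) :
    ∃ A p q B, w = A ++ p ++ B ∧ u = A ++ q ++ B ∧ Shape p q := by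
  rcases h with h | h | h | h | h | h | h | h | h
  · exact ⟨[], [], [], u, by simpa using h, by simp, Or.inl ⟨rfl, rfl⟩⟩
  · obtain ⟨x, A, B, hw, hu⟩ := conv_del h
    cases x
    · exact ⟨A, _, _, B, hw, hu, shape2⟩
    · exact ⟨A, _, _, B, hw, hu, shape3⟩
  · obtain ⟨b, hb⟩ := h
    obtain ⟨A, B, hw, hu⟩ := conv_ins hb
    cases b
    · exact ⟨A, _, _, B, hw, hu, shape4⟩
    · exact ⟨A, _, _, B, hw, hu, shape5⟩
  · obtain ⟨x, A, B, hw, hu⟩ := conv_flip1 h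
    cases x
    · exact ⟨A, _, _, B, hw, hu, shape6⟩
    · exact ⟨A, _, _, B, hw, hu, shape7⟩
  · obtain ⟨x, y, A, B, hw, hu⟩ := conv_flip2 h
    cases x <;> cases y
    · exact ⟨A, _, _, B, hw, hu, shape8⟩
    · exact ⟨A, _, _, B, hw, hu, shape10⟩
    · exact ⟨A, _, _, B, hw, hu, shape11⟩
    · exact ⟨A, _, _, B, hw, hu, shape9⟩
  · rcases conv_expand h with ⟨A, B, hw, hu⟩ | ⟨A, B, hw, hu⟩
    · exact ⟨A, _, _, B, hw, hu, shape12⟩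
    · exact ⟨A, _, _, B, hw, hu, shape13⟩
  · obtain ⟨A, B, hw, hu⟩ := conv_pair h
    exact ⟨A, _, _, B, hw, hu, shape14⟩
  · obtain ⟨A, B, hw, hu⟩ := conv_pair h
    exact ⟨A, _, _, B, hw, hu, shape15⟩
  · obtain ⟨A, B, hw, hu⟩ := conv_010 h
    exact ⟨A, _, _, B, hw, hu, shape16⟩


/-- `C_{(a,b,c)}` corrects any single occurrence of an error from
`E`, without a priori knowledge of the error type. -/
theorem code_abc_corrects_all
    (n a b c : ℕ) (hn : 1 ≤ n) (ha : a ≤ 2 * (n + 1)) (hb : b ≤ 4) (hc : c ≤ 2 * n)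
    (u v : List Bool) (hu : u ∈ Cabc n a b c) (hv : v ∈ Cabc n a b c)
    (w : List Bool) (hw1 : Eall u w) (hw2 : Eall v w) : u = v := by
  obtain ⟨hlu, hvu, hwu, hsu⟩ := hu
  obtain ⟨hlv, hvv, hwv, hsv⟩ := hv
  have h5 : (5:ℤ) ∣ (wt u:ℤ) - wt v := by
    have hme : wt v ≡ wt u [MOD 5] := by unfold Nat.ModEq; rw [hwv, hwu]
    have := hme.dvd
    push_cast at this
    exact this
  have hvt : (2*(n:ℤ)+3) ∣ (vtSum u : ℤ) - vtSum v := by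
    have hme : vtSum v ≡ vtSum u [MOD 2*n+3] := by unfold Nat.ModEq; rw [hvv, hvu]
    have := hme.dvd
    push_cast at this
    exact this
  have hws : (2*(n:ℤ)+1) ∣ (wSum u : ℤ) - wSum v := by
    have hme : wSum v ≡ wSum u [MOD 2*n+1] := by unfold Nat.ModEq; rw [hsv, hsu]
    have := hme.dvd
    push_cast at this
    exact this
  obtain ⟨A1, p1, q1, B1, e1, f1, s1⟩ := EallShape hw1
  obtain ⟨A2, p2, q2, B2, e2, f2, s2⟩ := EallShape hw2
  exact crux n hn e1 f1 e2 f2 s1 s2 hlu hlv h5 hvt hws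

end BinCode
end

section
/- Let q ≥ 2, k ≥ 1, n > 2k, let x ∈ Irr(n) be irreducible, and let x'' ∈ D_k^{*(≤1)}(x) be any descendant of x under any number of exact k-TDs and at most one k-ND. Set μ = μ(φ̄(x)) and μ'' = μ(φ̄(x'')). Then φ̂(x'') = φ̂(x) and the length difference satisfies |μ''| − |μ| ∈ {−k, 0, k, 2k}. -/
open List

namespace NoisyDup

variable {q : ℕ}

/-! ### Auxiliary development -/

/-- Length of `muAux k c z`. -/
def glen (k c : ℕ) (z : List (ZMod q)) : ℕ := (muAux k c z).length

lemma glen_nil (k c : ℕ) : glen (q := q) k c [] = c % k := by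
  simp [glen, muAux]

lemma glen_cons_zero (k c : ℕ) (t : List (ZMod q)) :
    glen k c ((0 : ZMod q) :: t) = glen k (c + 1) t := by
  simp [glen, muAux]

lemma glen_cons_ne (k c : ℕ) {b : ZMod q} (hb : b ≠ 0) (t : List (ZMod q)) :
    glen k c (b :: t) = c % k + 1 + glen k 0 t := by
  simp [glen, muAux, hb]; omega

lemma glen_add_k (k : ℕ) (z : List (ZMod q)) : ∀ c, glen k (c + k) z = glen k c z := by
  induction z with
  | nil => intro c; simp [glen_nil, Nat.add_mod_right]
  | cons b t ih =>
    intro c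
    by_cases hb : b = 0
    · subst hb; rw [glen_cons_zero, glen_cons_zero, show c + k + 1 = c + 1 + k by omega, ih]
    · rw [glen_cons_ne k _ hb, glen_cons_ne k _ hb, Nat.add_mod_right]

lemma glen_replicate (k : ℕ) (l : List (ZMod q)) :
    ∀ s c, glen k c (List.replicate s (0 : ZMod q) ++ l) = glen k (c + s) l := by
  intro s
  induction s with
  | zero => intro c; simp
  | succ s ih =>
    intro c
    rw [List.replicate_succ, List.cons_append, glen_cons_zero, ih]
    congr 1; omega

lemma glen_modeq (k : ℕ) (z : List (ZMod q)) : ∀ c, glen k c z ≡ c + z.length [MOD k] := by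
  induction z with
  | nil => intro c; simpa [glen_nil] using (Nat.mod_modEq c k)
  | cons b t ih =>
    intro c
    by_cases hb : b = 0
    · subst hb
      rw [glen_cons_zero]
      have := ih (c + 1)
      simpa [Nat.add_comm, Nat.add_assoc, Nat.add_left_comm] using this
    · rw [glen_cons_ne k _ hb]
      have h1 : c % k + 1 + glen k 0 t ≡ c + 1 + (0 + t.length) [MOD k] :=
        ((Nat.mod_modEq c k).add_right 1).add (ih 0)
      simpa [Nat.add_comm, Nat.add_assoc, Nat.add_left_comm] using h1

lemma glen_sub_dvd (k c : ℕ) {l₁ l₂ : List (ZMod q)} (h : l₁.length ≡ l₂.length [MOD k]) :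
    (k : ℤ) ∣ (glen k c l₁ : ℤ) - glen k c l₂ := by
  have h1 : glen k c l₁ ≡ glen k c l₂ [MOD k] :=
    (glen_modeq k l₁ c).trans (((Nat.ModEq.refl c).add h).trans (glen_modeq k l₂ c).symm)
  have := h1.symm.dvd
  simpa using this

lemma diffc (k : ℕ) (z : List (ZMod q)) :
    ∀ x y, ∃ m R, glen k x z = (x + m) % k + R ∧ glen k y z = (y + m) % k + R := by
  induction z with
  | nil => intro x y; exact ⟨0, 0, by simp [glen_nil], by simp [glen_nil]⟩
  | cons b t ih =>
    intro x y
    by_cases hb : b = 0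
    · subst hb
      obtain ⟨m, R, h1, h2⟩ := ih (x + 1) (y + 1)
      refine ⟨m + 1, R, ?_, ?_⟩
      · rw [glen_cons_zero, h1]; congr 2; omega
      · rw [glen_cons_zero, h2]; congr 2; omega
    · refine ⟨0, 1 + glen k 0 t, ?_, ?_⟩ <;>
        · rw [glen_cons_ne k _ hb]; simp only [Nat.add_zero]; omega

lemma gen_disj (k : ℕ) (hk : 1 ≤ k) (d : ℤ) (hd : (k : ℤ) ∣ d)
    (h1 : -(2 * (k : ℤ)) + 1 ≤ d) (h2 : d ≤ 3 * k - 1) :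
    d = -(k : ℤ) ∨ d = 0 ∨ d = k ∨ d = 2 * k := by
  obtain ⟨t, rfl⟩ := hd
  have hk' : (1 : ℤ) ≤ k := by exact_mod_cast hk
  have ht1 : -2 ≤ t := by nlinarith
  have ht2 : t ≤ 2 := by nlinarith
  interval_cases t <;> omega

lemma mod_lt' (k m : ℕ) (hk : 1 ≤ k) : m % k < k := Nat.mod_lt _ (by omega)

/-- Effect of the substitution `z_r ↦ z_r - a` on `glen`. -/
lemma glen_set (k : ℕ) (hk : 1 ≤ k) {a : ZMod q} (ha : a ≠ 0) :
    ∀ (z : List (ZMod q)) (r c : ℕ),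
      (glen k c (z.set r (z.getD r 0 - a)) : ℤ) - glen k c z = -(k : ℤ) ∨
      (glen k c (z.set r (z.getD r 0 - a)) : ℤ) - glen k c z = 0 ∨
      (glen k c (z.set r (z.getD r 0 - a)) : ℤ) - glen k c z = (k : ℤ) := by
  intro z
  induction z with
  | nil => intro r c; simp
  | cons b t ih =>
    intro r c
    match r with
    | 0 =>
      have hset : (b :: t).set 0 ((b :: t).getD 0 0 - a) = (b - a) :: t := by
        simp [List.getD_cons_zero]
      rw [hset]
      have hdvd : (k : ℤ) ∣ (glen k c ((b - a) :: t) : ℤ) - glen k c (b :: t) :=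
        glen_sub_dvd k c (by simp [Nat.ModEq.refl])
      by_cases hb : b = 0
      · subst hb
        have hna : (0 : ZMod q) - a ≠ 0 := by simpa using ha
        obtain ⟨m, R, h1, h2⟩ := diffc k t 0 (c + 1)
        rw [glen_cons_ne k c hna, glen_cons_zero k c, h1, h2] at hdvd ⊢
        have b1 := mod_lt' k c hk
        have b2 := mod_lt' k (0 + m) hk
        have b3 := mod_lt' k (c + 1 + m) hk
        have := gen_disj k hk _ hdvd (by omega) (by omega)
        omega
      · by_cases hba : b = a
        · have hz : b - a = 0 := by rw [hba, sub_self]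
          rw [hz] at hdvd ⊢
          obtain ⟨m, R, h1, h2⟩ := diffc k t (c + 1) 0
          rw [glen_cons_zero k c, glen_cons_ne k c hb, h1, h2] at hdvd ⊢
          have b1 := mod_lt' k c hk
          have b2 := mod_lt' k (c + 1 + m) hk
          have b3 := mod_lt' k (0 + m) hk
          have := gen_disj k hk _ hdvd (by omega) (by omega)
          omega
        · have hba' : b - a ≠ 0 := sub_ne_zero_of_ne hba
          rw [glen_cons_ne k c hba', glen_cons_ne k c hb]
          right; left; omega
    | r' + 1 =>
      have hset : (b :: t).set (r' + 1) ((b :: t).getD (r' + 1) 0 - a)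
          = b :: t.set r' (t.getD r' 0 - a) := by
        simp [List.getD_cons_succ]
      rw [hset]
      by_cases hb : b = 0
      · subst hb
        rw [glen_cons_zero k c, glen_cons_zero k c]
        exact ih r' (c + 1)
      · rw [glen_cons_ne k c hb, glen_cons_ne k c hb]
        have := ih r' 0
        omega

/-- `glen` is invariant under inserting `k` zeros anywhere. -/
lemma glen_insert_zeros (k : ℕ) :
    ∀ (z : List (ZMod q)) (i c : ℕ),
      glen k c (z.take i ++ List.replicate k (0 : ZMod q) ++ z.drop i) = glen k c z := by
  intro z
  induction z with
  | nil =>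
    intro i c
    simp only [List.take_nil, List.drop_nil, List.nil_append, List.append_nil]
    rw [show (List.replicate k (0 : ZMod q)) = List.replicate k (0 : ZMod q) ++ [] by simp,
      glen_replicate, glen_nil, glen_nil, Nat.add_mod_right]
  | cons b t ih =>
    intro i c
    match i with
    | 0 =>
      simp only [List.take_zero, List.nil_append, List.drop_zero]
      rw [glen_replicate, glen_add_k]
    | i + 1 =>
      simp only [List.take_succ_cons, List.drop_succ_cons, List.cons_append]
      by_cases hb : b = 0
      · subst hb; rw [glen_cons_zero, glen_cons_zero, ih]
      · rw [glen_cons_ne k c hb, glen_cons_ne k c hb, ih]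

/-- Processing a common prefix gives a common offset and counter. -/
lemma glen_append_diff (k : ℕ) (l₁ l₂ : List (ZMod q)) :
    ∀ (π : List (ZMod q)) (c : ℕ), ∃ E c',
      glen k c (π ++ l₁) = E + glen k c' l₁ ∧ glen k c (π ++ l₂) = E + glen k c' l₂ := by
  intro π
  induction π with
  | nil => intro c; exact ⟨0, c, by simp, by simp⟩
  | cons b t ih =>
    intro c
    by_cases hb : b = 0
    · subst hb
      obtain ⟨E, c', h1, h2⟩ := ih (c + 1)
      exact ⟨E, c', by rw [List.cons_append, glen_cons_zero, h1],
        by rw [List.cons_append, glen_cons_zero, h2]⟩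
    · obtain ⟨E, c', h1, h2⟩ := ih 0
      exact ⟨c % k + 1 + E, c', by rw [List.cons_append, glen_cons_ne k c hb, h1]; omega,
        by rw [List.cons_append, glen_cons_ne k c hb, h2]; omega⟩

/-- The core length estimate for a noisy pattern. -/
lemma glen_core (k : ℕ) (hk : 1 ≤ k) {a : ZMod q} (ha : a ≠ 0) (s t : ℕ) (hst : s + t + 1 = k)
    (β : List (ZMod q)) (c : ℕ) :
    ∃ e : ℤ, (e = -(k : ℤ) ∨ e = 0 ∨ e = (k : ℤ) ∨ e = 2 * (k : ℤ)) ∧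
      (glen k c (List.replicate s (0 : ZMod q) ++
        a :: (List.replicate t (0 : ZMod q) ++ β.set s (β.getD s 0 - a))) : ℤ)
        = glen k c β + e := by
  set β' := β.set s (β.getD s 0 - a) with hβ'
  refine ⟨_ - (glen k c β : ℤ), ?_, by ring⟩
  have hlen : (List.replicate s (0 : ZMod q) ++
      a :: (List.replicate t (0 : ZMod q) ++ β')).length ≡ β.length [MOD k] := by
    have h : (List.replicate s (0 : ZMod q) ++
        a :: (List.replicate t (0 : ZMod q) ++ β')).length = β.length + k := by
      simp [hβ']; omega
    rw [h]
    exact Nat.add_mod_right _ _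
  have hdvd := glen_sub_dvd (q := q) k c hlen
  rw [glen_replicate, glen_cons_ne k (c + s) ha,
    glen_replicate k β' t 0] at hdvd ⊢
  obtain ⟨m, R, h1, h2⟩ := diffc k β (0 + t) c
  have hset := glen_set k hk ha β s (0 + t)
  rw [← hβ', h1] at hset
  rw [h2] at hdvd ⊢
  have b1 := mod_lt' k (c + s) hk
  have b2 := mod_lt' k (c + m) hk
  have b3 := mod_lt' k (0 + t + m) hk
  have := gen_disj k hk _ hdvd (by omega) (by omega)
  omega

/-! ### `getD` helpers and the effect of duplications on `barPhi` -/

lemma getD_take' (l : List (ZMod q)) (n m : ℕ) :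
    (l.take n).getD m 0 = if m < n then l.getD m 0 else 0 := by
  rw [List.getD_eq_getElem?_getD, List.getD_eq_getElem?_getD, List.getElem?_take]
  split <;> simp

lemma getD_drop' (l : List (ZMod q)) (n m : ℕ) :
    (l.drop n).getD m 0 = l.getD (n + m) 0 := by
  rw [List.getD_eq_getElem?_getD, List.getD_eq_getElem?_getD, List.getElem?_drop]

lemma getD_replicate' (n m : ℕ) :
    (List.replicate n (0 : ZMod q)).getD m 0 = 0 := by
  rw [List.getD_eq_getElem?_getD, List.getElem?_replicate]
  split <;> simp

lemma getD_set' (l : List (ZMod q)) (p m : ℕ) (b : ZMod q) :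
    (l.set p b).getD m 0 = if p = m ∧ p < l.length then b else l.getD m 0 := by
  rw [List.getD_eq_getElem?_getD, List.getD_eq_getElem?_getD, List.getElem?_set]
  by_cases h1 : p = m
  · subst h1
    by_cases h2 : p < l.length
    · simp [h2]
    · simp only [h2, if_neg, and_false, if_false]
      rw [List.getElem?_eq_none (by omega)]
      simp
  · simp [h1]

lemma getD_append' (l₁ l₂ : List (ZMod q)) (m : ℕ) :
    (l₁ ++ l₂).getD m 0 = if m < l₁.length then l₁.getD m 0 else l₂.getD (m - l₁.length) 0 := by
  split
  · exact List.getD_append _ _ _ _ (by assumption)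
  · exact List.getD_append_right _ _ _ _ (by omega)

lemma length_barPhi (k : ℕ) (u : List (ZMod q)) : (barPhi k u).length = u.length - k := by
  simp [barPhi]

lemma getD_barPhi (k : ℕ) (u : List (ZMod q)) {m : ℕ} (hm : m < u.length - k) :
    (barPhi k u).getD m 0 = u.getD (m + k) 0 - u.getD m 0 := by
  rw [List.getD_eq_getElem (_) _ (by simp [length_barPhi, hm])]
  simp [barPhi]

lemma eq_of_getD {l₁ l₂ : List (ZMod q)} (h : l₁.length = l₂.length)
    (h2 : ∀ m, m < l₁.length → l₁.getD m 0 = l₂.getD m 0) : l₁ = l₂ := by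
  refine List.ext_getElem h fun n h₁ h₂ => ?_
  have := h2 n h₁
  rwa [List.getD_eq_getElem _ _ h₁, List.getD_eq_getElem _ _ h₂] at this

lemma dup_eq {i k : ℕ} {u : List (ZMod q)} (h : i + k ≤ u.length) :
    dup i k u = u.take (i + k) ++ u.drop i := by
  rw [dup, if_pos h, List.take_add]

lemma length_dup {i k : ℕ} {u : List (ZMod q)} (h : i + k ≤ u.length) :
    (dup i k u).length = u.length + k := by
  rw [dup_eq h]; simp; omega

lemma getD_dup {i k : ℕ} {u : List (ZMod q)} (h : i + k ≤ u.length) (m : ℕ) :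
    (dup i k u).getD m 0 = if m < i + k then u.getD m 0 else u.getD (m - k) 0 := by
  rw [dup_eq h, getD_append', List.length_take]
  have hmin : min (i + k) u.length = i + k := by omega
  rw [hmin, getD_take', getD_drop']
  split
  · simp [*]
  · rename_i hm
    rw [show i + (m - (i + k)) = m - k by omega]

lemma take_k_dup (i k : ℕ) (u : List (ZMod q)) : (dup i k u).take k = u.take k := by
  by_cases h : i + k ≤ u.length
  · rw [dup_eq h, List.take_append, List.length_take,
      show k - min (i + k) u.length = 0 by omega, List.take_zero, List.append_nil,
      List.take_take, show min k (i + k) = k by omega]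
  · rw [dup, if_neg h]

lemma take_k_set (w : List (ZMod q)) (p : ℕ) (b : ZMod q) (k : ℕ) (h : k ≤ p) :
    (w.set p b).take k = w.take k := by
  refine eq_of_getD (by simp) fun m hm => ?_
  simp only [List.length_take, List.length_set] at hm
  rw [getD_take', getD_take', getD_set']
  have : ¬(p = m ∧ p < w.length) := by omega
  simp [this]

lemma barPhi_dup {i k : ℕ} {u : List (ZMod q)} (h : i + k ≤ u.length) :
    barPhi k (dup i k u) =
      (barPhi k u).take i ++ List.replicate k (0 : ZMod q) ++ (barPhi k u).drop i := by
  have hL : (barPhi k u).length = u.length - k := length_barPhi k u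
  refine eq_of_getD ?_ fun m hm => ?_
  · simp only [length_barPhi, length_dup h, List.length_append, List.length_take,
      List.length_replicate, List.length_drop, hL]
    omega
  · rw [length_barPhi, length_dup h] at hm
    have hm' : m < u.length := by omega
    rw [getD_barPhi k _ (by rw [length_dup h]; omega), getD_dup h, getD_dup h,
      getD_append', getD_append']
    simp only [List.length_append, List.length_take, List.length_replicate, hL]
    rw [getD_take', getD_replicate', getD_drop']
    by_cases h1 : m < i
    · have c1 : m + k < i + k := by omega
      simp only [if_pos c1, if_pos h1, if_pos (show m < i + k by omega),
        if_pos (show m < min i (u.length - k) by omega),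
        if_pos (show m < min i (u.length - k) + k by omega)]
      rw [getD_barPhi k u (by omega)]
    · by_cases h2 : m < i + k
      · have c1 : ¬ (m + k < i + k) := by omega
        have c2 : m + k - k = m := by omega
        simp only [if_neg c1, if_pos h2, c2,
          if_pos (show m < min i (u.length - k) + k by omega),
          if_neg (show ¬ m < min i (u.length - k) by omega)]
        simp
      · have c1 : ¬ (m + k < i + k) := by omega
        have c2 : m + k - k = m := by omega
        simp only [if_neg c1, if_neg h2, c2,
          if_neg (show ¬ m < min i (u.length - k) + k by omega)]
        rw [show i + (m - (min i (u.length - k) + k)) = m - k by omega,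
          getD_barPhi k u (by omega), show m - k + k = m by omega]

lemma getD_singleton (b : ZMod q) (m : ℕ) :
    ([b] : List (ZMod q)).getD m 0 = if m = 0 then b else 0 := by
  cases m <;> simp

lemma getD_barPhi' (k : ℕ) (u : List (ZMod q)) (m : ℕ) :
    (barPhi k u).getD m 0 = if m < u.length - k then u.getD (m + k) 0 - u.getD m 0 else 0 := by
  split
  · exact getD_barPhi k u ‹_›
  · rw [List.getD_eq_getElem?_getD, List.getElem?_eq_none (by rw [length_barPhi]; omega)]
    rfl

lemma barPhi_noisy {i k p : ℕ} {u : List (ZMod q)} (hk : 1 ≤ k) (h : i + k ≤ u.length)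
    (hp1 : i + k ≤ p) (hp2 : p < i + 2 * k) (a : ZMod q) :
    barPhi k (addAt (dup i k u) p a) =
      (barPhi k u).take i ++ List.replicate (p - k - i) (0 : ZMod q) ++ [a] ++
        List.replicate (i + 2 * k - 1 - p) (0 : ZMod q) ++
        ((barPhi k u).drop i).set (p - k - i)
          (((barPhi k u).drop i).getD (p - k - i) 0 - a) := by
  have hL : (barPhi k u).length = u.length - k := length_barPhi k u
  have hwlen : (dup i k u).length = u.length + k := length_dup h
  refine eq_of_getD ?_ fun m hm => ?_
  · simp only [length_barPhi, addAt, List.length_set, hwlen, List.length_append,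
      List.length_take, List.length_replicate, List.length_drop, List.length_cons,
      List.length_nil, hL]
    omega
  · rw [length_barPhi, addAt, List.length_set, hwlen] at hm
    have hm' : m < u.length := by omega
    rw [getD_barPhi _ _ (by simp only [addAt, List.length_set, hwlen]; omega)]
    simp only [addAt]
    rw [getD_set', getD_set', getD_dup h, getD_dup h, getD_dup h]
    simp only [getD_append', getD_take', getD_singleton, getD_replicate', getD_set',
      getD_drop', getD_barPhi', List.length_append, List.length_take, List.length_replicate,
      List.length_cons, List.length_nil, List.length_drop, List.length_set, hL, hwlen]
    rw [if_neg (show ¬ p < i + k by omega)]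
    rw [show i ⊓ (u.length - k) = i by omega]
    rw [show i + (p - k - i) + (0 + 1) + (i + 2 * k - 1 - p) = i + k by omega]
    rw [show i + (p - k - i) + (0 + 1) = p - k + 1 by omega]
    simp only [show i + (p - k - i) = p - k by omega, Nat.add_sub_cancel,
      Nat.sub_add_cancel (show k ≤ p by omega)]
    split_ifs <;>
      first
        | (exfalso; omega)
        | ring1
        | (rw [show p - k = m by omega]; try ring1)
        | (rw [show p = m by omega]; try ring1)
        | (rw [show i + (m - (i + k)) = m - k by omega,
               show m - k + k = m by omega]; try ring1)

/-! ### Steps preserve the invariants -/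

lemma exact_pres (k : ℕ) {u v : List (ZMod q)} (h : ExactStep k u v) :
    v.take k = u.take k ∧ glen k 0 (barPhi k v) = glen k 0 (barPhi k u) := by
  obtain ⟨i, hik, rfl⟩ := h
  refine ⟨take_k_dup i k u, ?_⟩
  rw [barPhi_dup hik]
  exact glen_insert_zeros k (barPhi k u) i 0

lemma desc_pres (k : ℕ) {u v : List (ZMod q)} (h : ExactDesc k u v) :
    v.take k = u.take k ∧ glen k 0 (barPhi k v) = glen k 0 (barPhi k u) := by
  induction h with
  | refl => exact ⟨rfl, rfl⟩
  | tail _ hstep ih =>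
    obtain ⟨h1, h2⟩ := exact_pres k hstep
    exact ⟨h1.trans ih.1, h2.trans ih.2⟩

lemma noisy_pres (k : ℕ) (hk : 1 ≤ k) {u v : List (ZMod q)} (h : NoisyStep k u v) :
    v.take k = u.take k ∧ ∃ e : ℤ, (e = -(k : ℤ) ∨ e = 0 ∨ e = (k : ℤ) ∨ e = 2 * (k : ℤ)) ∧
      (glen k 0 (barPhi k v) : ℤ) = glen k 0 (barPhi k u) + e := by
  obtain ⟨i, a, j, hik, ha, hj1, hj2, rfl⟩ := h
  set p := j - 1 with hp
  have hp1 : i + k ≤ p := by omega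
  have hp2 : p < i + 2 * k := by omega
  constructor
  · rw [addAt, take_k_set _ _ _ _ (show k ≤ p by omega), take_k_dup]
  · rw [barPhi_noisy hk hik hp1 hp2 a]
    set z := barPhi k u with hz
    have hshape : z.take i ++ List.replicate (p - k - i) (0 : ZMod q) ++ [a] ++
        List.replicate (i + 2 * k - 1 - p) (0 : ZMod q) ++
        (z.drop i).set (p - k - i) ((z.drop i).getD (p - k - i) 0 - a)
        = z.take i ++ (List.replicate (p - k - i) (0 : ZMod q) ++
            a :: (List.replicate (i + 2 * k - 1 - p) (0 : ZMod q) ++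
              (z.drop i).set (p - k - i) ((z.drop i).getD (p - k - i) 0 - a))) := by
      simp [List.append_assoc]
    rw [hshape]
    obtain ⟨E, c', h1, h2⟩ := glen_append_diff k
      (List.replicate (p - k - i) (0 : ZMod q) ++
        a :: (List.replicate (i + 2 * k - 1 - p) (0 : ZMod q) ++
          (z.drop i).set (p - k - i) ((z.drop i).getD (p - k - i) 0 - a)))
      (z.drop i) (z.take i) 0
    obtain ⟨e, he, hcore⟩ := glen_core k hk ha (p - k - i) (i + 2 * k - 1 - p)
      (by omega) (z.drop i) c'
    refine ⟨e, he, ?_⟩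
    have h2' : glen k 0 z = E + glen k c' (z.drop i) := by
      conv_lhs => rw [← List.take_append_drop i z]
      exact h2
    rw [h1]
    omega

/-- for an irreducible `x` and any descendant `x''` under many
exact `k`-TDs and at most one `k`-ND, the first `k` symbols are unchanged and
the length of the `μ`-root changes by `-k`, `0`, `k`, or `2k`. -/
theorem root_length_change
    (q k n : ℕ) (hq : 2 ≤ q) (hk : 1 ≤ k) (hn : 2 * k < n)
    (x : List (ZMod q)) (hx : x.length = n) (hirr : IsIrreducible k x)
    (x'' : List (ZMod q)) (hdesc : x'' ∈ descCone k x) :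
    hatPhi k x'' = hatPhi k x ∧
    ((mu k (barPhi k x'')).length : ℤ) - ((mu k (barPhi k x)).length : ℤ) ∈
      ({-(k : ℤ), 0, (k : ℤ), 2 * (k : ℤ)} : Set ℤ) := by
  have hmu : ∀ w : List (ZMod q), (mu k w).length = glen k 0 w := fun w => rfl
  rcases hdesc with hd | ⟨u, v, h1, h2, h3⟩
  · obtain ⟨ht, hg⟩ := desc_pres k hd
    refine ⟨ht, ?_⟩
    simp only [Set.mem_insert_iff, Set.mem_singleton_iff, hmu]
    omega
  · obtain ⟨t1, g1⟩ := desc_pres k h1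
    obtain ⟨t2, e, he, g2⟩ := noisy_pres k hk h2
    obtain ⟨t3, g3⟩ := desc_pres k h3
    refine ⟨t3.trans (t2.trans t1), ?_⟩
    simp only [Set.mem_insert_iff, Set.mem_singleton_iff, hmu]
    omega


end NoisyDup
end
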